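/- arXiv:2501.12091 — 8 statements merged into one kernel-verified Lean document; each statement's English description precedes it below -/
import Mathlib

section
/- Let S be a finitely generated submonoid of a lattice M with ℤS = M, and let C = ℝ_{≥0} S be the cone it generates in M ⊗ ℝ. Then the saturation S̄ = C ∩ M is also a finitely generated monoid (Gordan's lemma for the saturation). -/
noncomputable section


noncomputable section

def emb (d : ℕ) : (Fin d → ℤ) →+ (Fin d → ℝ) where
  toFun m := fun i => (m i : ℝ)
  map_zero' := by ext i; simp
  map_add' x y := by ext i; simp [Pi.add_apply]

def IsFace (d : ℕ) (C D : Set (Fin d → ℝ)) : Prop :=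
  ∃ u : (Fin d → ℝ) →ₗ[ℝ] ℝ, (∀ x ∈ C, 0 ≤ u x) ∧ D = {x ∈ C | u x = 0}

def latticeOf (d : ℕ) (S : AddSubmonoid (Fin d → ℤ)) (D : Set (Fin d → ℝ)) :
    AddSubgroup (Fin d → ℤ) :=
  AddSubgroup.closure ((S : Set (Fin d → ℤ)) ∩ (emb d) ⁻¹' D)

def latIn (d : ℕ) (D : Set (Fin d → ℝ)) : AddSubgroup (Fin d → ℤ) :=
  AddSubgroup.comap (emb d) (Submodule.span ℝ D).toAddSubgroup

def IsRelSat (d : ℕ) (S : AddSubmonoid (Fin d → ℤ)) (C D : Set (Fin d → ℝ)) : Prop :=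
  IsFace d C D ∧ D ≠ C ∧
    latticeOf d S D =
      (⨅ D' ∈ {D' : Set (Fin d → ℝ) | IsFace d C D' ∧ D ⊂ D'}, latticeOf d S D') ⊓ latIn d D

def IsRUF (d : ℕ) (S : AddSubmonoid (Fin d → ℤ)) (C D : Set (Fin d → ℝ)) : Prop :=
  IsFace d C D ∧ ¬ IsRelSat d S C D

def Seminormal (d : ℕ) (S : AddSubmonoid (Fin d → ℤ)) (C : Set (Fin d → ℝ)) : Prop :=
  ∀ D : Set (Fin d → ℝ), IsFace d C D →
    ∀ m : Fin d → ℤ, emb d m ∈ intrinsicInterior ℝ D → (m ∈ S ↔ m ∈ latticeOf d S D)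

def coneOf (d : ℕ) (S : AddSubmonoid (Fin d → ℤ)) : Set (Fin d → ℝ) :=
  ↑(Submodule.span NNReal (emb d '' (S : Set (Fin d → ℤ))))

def pFace (d p : ℕ) (S : AddSubmonoid (Fin d → ℤ)) (D : Set (Fin d → ℝ)) : Prop :=
  p ∣ (latticeOf d S D).relIndex (latIn d D)

def Mtilde (d p : ℕ) (S : AddSubmonoid (Fin d → ℤ)) (D : Set (Fin d → ℝ)) : Set (Fin d → ℤ) :=
  {x | x ∈ latIn d D ∧ ∃ m : ℤ, IsCoprime m (p : ℤ) ∧ m • x ∈ latticeOf d S D}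


/-- Gordan's lemma for the saturation: if `S` is a finitely generated submonoid of
`ℤ^d` with `ℤS = ℤ^d` and `C = ℝ_{≥0} S` is the cone it generates in `ℝ^d`, then the
saturation `S̄ = C ∩ ℤ^d` is again a finitely generated monoid. -/
theorem stmt_4 (d : ℕ) (S : AddSubmonoid (Fin d → ℤ)) (hfg : S.FG)
    (hZ : AddSubgroup.closure (S : Set (Fin d → ℤ)) = ⊤) :
    (AddSubmonoid.comap (emb d)
      (Submodule.span NNReal (emb d '' (S : Set (Fin d → ℤ)))).toAddSubmonoid).FG := by
  classical
  obtain ⟨F, hF⟩ := hfg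
  set Sb := AddSubmonoid.comap (emb d)
      (Submodule.span NNReal (emb d '' (S : Set (Fin d → ℤ)))).toAddSubmonoid with hSbdef
  have hFS : (F : Set (Fin d → ℤ)) ⊆ (S : Set _) := hF ▸ AddSubmonoid.subset_closure
  have hemb_inj : Function.Injective (emb d) := by
    intro a b h
    funext i
    have h2 : ((a i : ℝ)) = ((b i : ℝ)) := congrFun h i
    exact_mod_cast h2
  have hspan : Submodule.span NNReal (emb d '' (S : Set (Fin d → ℤ)))
      = Submodule.span NNReal (emb d '' (F : Set (Fin d → ℤ))) := by
    refine le_antisymm ?_ (Submodule.span_mono (Set.image_mono hFS))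
    rw [Submodule.span_le]
    rintro _ ⟨s, hs, rfl⟩
    have hs' : s ∈ AddSubmonoid.closure (F : Set (Fin d → ℤ)) := hF ▸ hs
    have hmem : emb d s ∈ AddSubmonoid.closure (emb d '' (F : Set (Fin d → ℤ))) := by
      rw [← AddMonoidHom.map_mclosure]
      exact AddSubmonoid.mem_map_of_mem _ hs'
    refine AddSubmonoid.closure_le.mpr (fun y hy => ?_) hmem
    exact Submodule.subset_span hy
  -- membership in Sb via finite sums
  have hmemSb : ∀ x : Fin d → ℤ, x ∈ Sb ↔
      ∃ f : (Fin d → ℝ) → NNReal, ∑ s ∈ F, f (emb d s) • emb d s = emb d x := by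
    intro x
    rw [hSbdef, AddSubmonoid.mem_comap, Submodule.mem_toAddSubmonoid, hspan]
    have himg : (emb d '' (F : Set (Fin d → ℤ))) = ((F.image (emb d) : Finset (Fin d → ℝ)) : Set _) := by
      rw [Finset.coe_image]
    rw [himg, Submodule.mem_span_finset]
    constructor
    · rintro ⟨f, -, hf⟩
      refine ⟨f, ?_⟩
      rw [← hf, Finset.sum_image (fun a ha b hb h => hemb_inj h)]
    · rintro ⟨f, hf⟩
      refine ⟨fun a => if a ∈ F.image (emb d) then f a else 0, ?_, ?_⟩
      · intro a ha
        by_contra h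
        exact ha (if_neg (fun h' => h (Finset.mem_coe.2 h')))
      rw [Finset.sum_image (fun a ha b hb h => hemb_inj h), ← hf]
      exact Finset.sum_congr rfl (fun s hs => by simp only [if_pos (Finset.mem_image_of_mem _ hs)])
  -- the bound
  set B : Fin d → ℤ := fun i => ∑ s ∈ F, |s i| with hB
  set K : Set (Fin d → ℤ) := Set.pi Set.univ (fun i => Set.Icc (-(B i)) (B i)) with hK
  have hKfin : K.Finite := Set.Finite.pi (fun i => Set.finite_Icc _ _)
  -- F ⊆ Sb
  have hFSb : (F : Set (Fin d → ℤ)) ⊆ (Sb : Set _) := by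
    intro s hs
    rw [SetLike.mem_coe, hSbdef, AddSubmonoid.mem_comap, Submodule.mem_toAddSubmonoid]
    exact Submodule.subset_span ⟨s, hFS hs, rfl⟩
  -- decomposition
  have hdec : ∀ x ∈ Sb, ∃ z ∈ K ∩ (Sb : Set _), x - z ∈ AddSubmonoid.closure (F : Set (Fin d → ℤ)) := by
    intro x hx
    obtain ⟨f, hf⟩ := (hmemSb x).mp hx
    set n : (Fin d → ℤ) → ℕ := fun s => ⌊(f (emb d s) : ℝ)⌋₊ with hn
    set c : (Fin d → ℤ) → NNReal := fun s => f (emb d s) - (n s : NNReal) with hc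
    have hnle : ∀ s, ((n s : NNReal)) ≤ f (emb d s) := by
      intro s
      rw [← NNReal.coe_le_coe]
      push_cast
      exact Nat.floor_le (f (emb d s)).coe_nonneg
    have hcle : ∀ s, (c s : ℝ) ≤ 1 := by
      intro s
      have h1 : (c s : ℝ) = (f (emb d s) : ℝ) - (n s : ℝ) := by
        rw [show c s = f (emb d s) - (n s : NNReal) from rfl, NNReal.coe_sub (hnle s)]
        push_cast; ring
      have h2 := Nat.lt_floor_add_one ((f (emb d s) : ℝ))
      have h3 : (n s : ℝ) = (⌊(f (emb d s) : ℝ)⌋₊ : ℝ) := rfl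
      rw [h1, h3]
      linarith
    set y : Fin d → ℤ := ∑ s ∈ F, n s • s with hy
    set z : Fin d → ℤ := x - y with hz
    have hsplit : ∀ s, f (emb d s) • emb d s
        = n s • emb d s + c s • emb d s := by
      intro s
      have h4 : (n s : NNReal) + c s = f (emb d s) := add_tsub_cancel_of_le (hnle s)
      rw [← h4, add_smul, Nat.cast_smul_eq_nsmul]
    have hembz : emb d z = ∑ s ∈ F, c s • emb d s := by
      have hey : emb d y = ∑ s ∈ F, n s • emb d s := by
        rw [hy, map_sum]
        exact Finset.sum_congr rfl (fun s _ => by rw [AddMonoidHom.map_nsmul])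
      have : emb d x = emb d y + ∑ s ∈ F, c s • emb d s := by
        rw [← hf, hey, ← Finset.sum_add_distrib]
        exact Finset.sum_congr rfl (fun s _ => hsplit s)
      rw [hz, map_sub, this]
      abel
    have hzSb : z ∈ Sb := by
      rw [hSbdef, AddSubmonoid.mem_comap, Submodule.mem_toAddSubmonoid, hembz]
      exact Submodule.sum_smul_mem _ _ (fun s hs => Submodule.subset_span ⟨s, hFS hs, rfl⟩)
    have hzK : z ∈ K := by
      rw [hK]
      intro i _
      have hcoord : emb d z i = ∑ s ∈ F, (c s : ℝ) * (s i : ℝ) := by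
        rw [hembz]
        simp only [Finset.sum_apply, Pi.smul_apply, NNReal.smul_def, smul_eq_mul]
        rfl
      have habs : |emb d z i| ≤ (B i : ℝ) := by
        rw [hcoord, hB]
        push_cast
        refine le_trans (Finset.abs_sum_le_sum_abs _ _) ?_
        refine Finset.sum_le_sum (fun s hs => ?_)
        rw [abs_mul, abs_of_nonneg (c s).coe_nonneg]
        calc (c s : ℝ) * |(s i : ℝ)| ≤ 1 * |(s i : ℝ)| :=
              mul_le_mul_of_nonneg_right (hcle s) (abs_nonneg _)
          _ = |(s i : ℝ)| := one_mul _
      have : |(z i : ℝ)| ≤ (B i : ℝ) := habs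
      rw [Set.mem_Icc]
      constructor
      · have := (abs_le.mp this).1
        exact_mod_cast this
      · have := (abs_le.mp this).2
        exact_mod_cast this
    refine ⟨z, ⟨hzK, hzSb⟩, ?_⟩
    have : x - z = y := by rw [hz]; ring
    rw [this, hy]
    exact sum_mem (fun s hs => AddSubmonoid.nsmul_mem _ (AddSubmonoid.subset_closure hs) _)
  -- conclude
  rw [AddSubmonoid.fg_iff]
  refine ⟨(F : Set (Fin d → ℤ)) ∪ (K ∩ (Sb : Set _)), ?_, ?_⟩
  · apply le_antisymm
    · rw [AddSubmonoid.closure_le]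
      rintro x (hx | hx)
      · exact hFSb hx
      · exact hx.2
    · intro x hx
      obtain ⟨z, hzmem, hxz⟩ := hdec x hx
      have hz' : z ∈ AddSubmonoid.closure ((F : Set (Fin d → ℤ)) ∪ (K ∩ (Sb : Set _))) :=
        AddSubmonoid.subset_closure (Or.inr hzmem)
      have hxz' : x - z ∈ AddSubmonoid.closure ((F : Set (Fin d → ℤ)) ∪ (K ∩ (Sb : Set _))) := by
        refine AddSubmonoid.closure_mono Set.subset_union_left hxz
      have := AddSubmonoid.add_mem _ hxz' hz'
      simpa using this
  · exact F.finite_toSet.union (hKfin.inter_of_left _)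


end
end
end

section
/- Let S be a seminormal affine monoid in a lattice M with cone C, i.e., for every face D of C, S ∩ int(D) = M_D ∩ int(D) where M_D = ℤ(S ∩ D). Then an element u of the saturation S̄ = C ∩ M lies in S if and only if for every relatively unsaturated face D with u ∈ D, one has u ∈ M_D. -/
noncomputable section


noncomputable section

open Set Submodule Pointwise

section Helpers

lemma aff_eq {V : Type*} [AddCommGroup V] [Module ℝ V] {s : Set V} (h0 : (0:V) ∈ s) :
    (affineSpan ℝ s : Set V) = (Submodule.span ℝ s : Set V) := by
  have h0' : (0:V) ∈ affineSpan ℝ s := subset_affineSpan ℝ s h0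
  ext x
  constructor
  · intro hx
    have hle : affineSpan ℝ s ≤ (Submodule.span ℝ s).toAffineSubspace :=
      affineSpan_le.2 (fun y hy => (Submodule.mem_toAffineSubspace).2 (Submodule.subset_span hy))
    exact (Submodule.mem_toAffineSubspace).1 (hle hx)
  · intro hx
    simp only [SetLike.mem_coe] at hx ⊢
    induction hx using Submodule.span_induction with
    | mem y hy => exact subset_affineSpan ℝ s hy
    | zero => exact h0'
    | add y z hy hz hy' hz' =>
      have := (affineSpan ℝ s).smul_vsub_vadd_mem 1 hy' h0' hz'
      simpa using this
    | smul a y hy hy' =>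
      have := (affineSpan ℝ s).smul_vsub_vadd_mem a hy' h0' h0'
      simpa using this

lemma mem_intr {V : Type*} [NormedAddCommGroup V] [NormedSpace ℝ V] {s : Set V}
    (h0 : (0:V) ∈ s) {x : V} (hxs : x ∈ s)
    (hx : (⟨x, Submodule.subset_span hxs⟩ : ↥(Submodule.span ℝ s)) ∈
      interior ((↑) ⁻¹' s : Set ↥(Submodule.span ℝ s))) :
    x ∈ intrinsicInterior ℝ s := by
  have hA : (affineSpan ℝ s : Set V) = (Submodule.span ℝ s : Set V) := aff_eq h0
  set j : ↥(affineSpan ℝ s) → ↥(Submodule.span ℝ s) := fun z =>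
    ⟨(z : V), by have := z.2; rw [← SetLike.mem_coe, ← hA]; exact this⟩ with hj_def
  have hj : Continuous j := Continuous.subtype_mk continuous_subtype_val _
  set y₀ : ↥(affineSpan ℝ s) := ⟨x, subset_affineSpan ℝ s hxs⟩ with hy₀
  have hjy : j y₀ ∈ interior ((↑) ⁻¹' s : Set ↥(Submodule.span ℝ s)) := by
    have : j y₀ = ⟨x, Submodule.subset_span hxs⟩ := Subtype.ext rfl
    rw [this]; exact hx
  have hpre : ((↑) ⁻¹' s : Set ↥(affineSpan ℝ s)) = j ⁻¹' ((↑) ⁻¹' s) := rfl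
  have : y₀ ∈ interior ((↑) ⁻¹' s : Set ↥(affineSpan ℝ s)) := by
    rw [hpre]
    exact preimage_interior_subset_interior_preimage hj hjy
  exact mem_intrinsicInterior.mpr ⟨y₀, this, rfl⟩

lemma sep {V : Type*} [NormedAddCommGroup V] [NormedSpace ℝ V] [FiniteDimensional ℝ V]
    {s : Set V} (hconv : Convex ℝ s) (h0 : (0:V) ∈ s)
    (hcone : ∀ c : ℝ, 0 ≤ c → ∀ y ∈ s, c • y ∈ s)
    {x : V} (hxs : x ∈ s) (hni : x ∉ intrinsicInterior ℝ s) :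
    ∃ g : V →ₗ[ℝ] ℝ, (∀ y ∈ s, 0 ≤ g y) ∧ g x = 0 ∧ ∃ y ∈ s, 0 < g y := by
  set W := Submodule.span ℝ s with hW
  set t : Set ↥W := (↑) ⁻¹' s with ht
  have htmem : ∀ z : ↥W, z ∈ t ↔ (z : V) ∈ s := fun z => Iff.rfl
  have hconvt : Convex ℝ t := hconv.linear_preimage W.subtype
  have hconet : ∀ c : ℝ, 0 ≤ c → ∀ z ∈ t, c • z ∈ t := by
    intro c hc z hz
    exact hcone c hc _ hz
  have h0t : (0 : ↥W) ∈ t := h0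
  have hspant : Submodule.span ℝ t = ⊤ := by
    apply Submodule.map_injective_of_injective (Submodule.injective_subtype W)
    rw [Submodule.map_span, Submodule.map_top, Submodule.range_subtype]
    have : W.subtype '' t = s := by
      rw [ht]
      exact Set.image_preimage_eq_of_subset (by
        intro y hy; exact ⟨⟨y, Submodule.subset_span hy⟩, rfl⟩)
    rw [this]
  have hafft : affineSpan ℝ t = ⊤ := by
    have : (affineSpan ℝ t : Set ↥W) = univ := by
      rw [aff_eq h0t, hspant]; simp
    rwa [AffineSubspace.coe_eq_univ_iff] at this
  have hint_ne : (interior t).Nonempty :=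
    (hconvt.interior_nonempty_iff_affineSpan_eq_top).2 hafft
  set xW : ↥W := ⟨x, Submodule.subset_span hxs⟩ with hxW
  have hxt : xW ∈ t := hxs
  have hxni : xW ∉ interior t := fun h => hni (mem_intr h0 hxs h)
  obtain ⟨f, hf⟩ := geometric_hahn_banach_open_point hconvt.interior isOpen_interior hxni
  obtain ⟨a₀, ha₀⟩ := hint_ne
  have hscale : ∀ c : ℝ, 0 < c → ∀ a ∈ interior t, c • a ∈ interior t := by
    intro c hc a ha
    have hsub : c • t ⊆ t := by
      rintro z ⟨y, hy, rfl⟩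
      exact hconet c hc.le y hy
    have : c • a ∈ interior (c • t) := by
      rw [interior_smul₀ hc.ne' t]
      exact Set.smul_mem_smul_set ha
    exact interior_mono hsub this
  have hfx0 : 0 ≤ f xW := by
    by_contra hneg
    push_neg at hneg
    have ha1 : f a₀ < f xW := hf a₀ ha₀
    have ha0neg : f a₀ < 0 := lt_trans ha1 hneg
    have hl : (0:ℝ) < f xW / (2 * f a₀) := div_pos_of_neg_of_neg hneg (by linarith)
    have := hf _ (hscale _ hl a₀ ha₀)
    rw [map_smul, smul_eq_mul] at this
    have heq : f xW / (2 * f a₀) * f a₀ = f xW / 2 := by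
      rw [div_mul_eq_mul_div, mul_comm (f xW), mul_comm (2:ℝ) (f a₀),
        mul_div_mul_left _ _ ha0neg.ne]
    nlinarith
  have hft : ∀ b ∈ t, f b ≤ 0 := by
    intro b hb
    by_contra hpos
    push_neg at hpos
    have ha1 : f a₀ < f xW := hf a₀ ha₀
    set μ := (2 * f xW - f a₀ + 1) / f b with hμ
    have hμpos : 0 < μ := div_pos (by linarith) hpos
    have hmem : (1/2 : ℝ) • a₀ + (1/2 : ℝ) • (μ • b) ∈ interior t :=
      hconvt.combo_interior_self_mem_interior ha₀ (hconet μ hμpos.le b hb)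
        (by norm_num) (by norm_num) (by norm_num)
    have := hf _ hmem
    rw [map_add, map_smul, map_smul, map_smul, smul_eq_mul, smul_eq_mul, smul_eq_mul] at this
    have hμb : μ * f b = 2 * f xW - f a₀ + 1 := div_mul_cancel₀ _ hpos.ne'
    nlinarith
  have hfx : f xW = 0 := le_antisymm (hft xW hxt) hfx0
  have ha₀neg : f a₀ < 0 := by
    have := hf a₀ ha₀
    rwa [hfx] at this
  obtain ⟨W', hcompl⟩ := Submodule.exists_isCompl W
  set π : V →ₗ[ℝ] ↥W := W.linearProjOfIsCompl W' hcompl with hπ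
  refine ⟨-((f : ↥W →ₗ[ℝ] ℝ).comp π), ?_, ?_, ?_⟩
  · intro y hy
    have hyW : y ∈ W := Submodule.subset_span hy
    have : π y = ⟨y, hyW⟩ := Submodule.linearProjOfIsCompl_apply_left hcompl ⟨y, hyW⟩
    simp only [LinearMap.neg_apply, LinearMap.comp_apply, this]
    have : f ⟨y, hyW⟩ ≤ 0 := hft _ hy
    simpa using this
  · have : π x = xW := Submodule.linearProjOfIsCompl_apply_left hcompl xW
    simp only [LinearMap.neg_apply, LinearMap.comp_apply, this, ContinuousLinearMap.coe_coe, hfx]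
    simp
  · refine ⟨(a₀ : V), (interior_subset ha₀ : a₀ ∈ t), ?_⟩
    have : π a₀ = a₀ := Submodule.linearProjOfIsCompl_apply_left hcompl a₀
    simp only [LinearMap.neg_apply, LinearMap.comp_apply, this, ContinuousLinearMap.coe_coe]
    linarith

lemma exists_finset_span {V : Type*} [AddCommGroup V] [Module ℝ V] [FiniteDimensional ℝ V]
    (Φ : Set V) : ∃ T : Finset V, ↑T ⊆ Φ ∧ ∀ f ∈ Φ, f ∈ Submodule.span ℝ (T : Set V) := by
  classical
  set b := Module.finBasis ℝ ↥(Submodule.span ℝ Φ) with hb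
  have hmem : ∀ i, ((b i : ↥(Submodule.span ℝ Φ)) : V) ∈ Submodule.span ℝ Φ := fun i => (b i).2
  choose t ht1 ht2 using fun i => Submodule.mem_span_finite_of_mem_span (hmem i)
  refine ⟨Finset.univ.biUnion t, ?_, ?_⟩
  · intro f hf
    simp only [Finset.coe_biUnion, Finset.mem_coe, Finset.mem_univ, Set.mem_iUnion] at hf
    obtain ⟨i, -, hi⟩ := hf
    exact ht1 i hi
  · intro f hf
    have hf' : f ∈ Submodule.span ℝ Φ := Submodule.subset_span hf
    set y : ↥(Submodule.span ℝ Φ) := ⟨f, hf'⟩ with hy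
    have hrepr : ∑ i, (b.repr y) i • b i = y := b.sum_repr y
    have : f = ∑ i, (b.repr y) i • ((b i : ↥(Submodule.span ℝ Φ)) : V) := by
      have := congrArg (Subtype.val) hrepr
      simp only [Submodule.coe_sum, Submodule.coe_smul] at this
      exact this.symm
    rw [this]
    refine Submodule.sum_mem _ fun i _ => Submodule.smul_mem _ _ ?_
    have : ((b i : ↥(Submodule.span ℝ Φ)) : V) ∈ Submodule.span ℝ (↑(t i) : Set V) := ht2 i
    refine Submodule.span_mono ?_ this
    intro z hz
    simp only [Finset.coe_biUnion, Finset.mem_coe, Finset.mem_univ, Set.mem_iUnion]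
    exact ⟨i, trivial, hz⟩

end Helpers

/-- Let `S` be a seminormal affine monoid in `ℤ^d` with pointed cone `C = ℝ_{≥0}S`.
An element `u` of the saturation `S̄ = C ∩ ℤ^d` lies in `S` if and only if for every
relatively unsaturated face `D` of `C` with `u ∈ D`, one has `u ∈ M_D = ℤ(S ∩ D)`. -/
theorem stmt_5 (d : ℕ) (S : AddSubmonoid (Fin d → ℤ)) (hfg : S.FG)
    (hZ : AddSubgroup.closure (S : Set (Fin d → ℤ)) = ⊤)
    (C : Set (Fin d → ℝ)) (hC : C = coneOf d S)
    (hpointed : ∀ x ∈ C, -x ∈ C → x = 0)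
    (hsn : Seminormal d S C)
    (u : Fin d → ℤ) (hu : emb d u ∈ C) :
    u ∈ S ↔ ∀ D : Set (Fin d → ℝ), IsRUF d S C D → emb d u ∈ D → u ∈ latticeOf d S D := by
  classical
  constructor
  · intro huS D hD huD
    exact AddSubgroup.subset_closure ⟨huS, huD⟩
  intro H
  -- basic cone facts
  have hCzero : (0 : Fin d → ℝ) ∈ C := by
    rw [hC]; exact Submodule.zero_mem _
  have hCadd : ∀ x ∈ C, ∀ y ∈ C, x + y ∈ C := by
    intro x hx y hy
    rw [hC] at *
    exact Submodule.add_mem _ hx hy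
  have hCsmul : ∀ c : ℝ, 0 ≤ c → ∀ x ∈ C, c • x ∈ C := by
    intro c hc x hx
    rw [hC] at *
    have := Submodule.smul_mem (Submodule.span NNReal (emb d '' (S : Set (Fin d → ℤ)))) (⟨c, hc⟩ : NNReal) hx
    exact this
  have hCconvex : Convex ℝ C := fun x hx y hy a b ha hb _ =>
    hCadd _ (hCsmul a ha x hx) _ (hCsmul b hb y hy)
  -- face facts
  have hface_sub : ∀ D, IsFace d C D → D ⊆ C := by
    rintro D ⟨f, hf, rfl⟩ x hx; exact hx.1
  have hface_zero : ∀ D, IsFace d C D → (0 : Fin d → ℝ) ∈ D := by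
    rintro D ⟨f, hf, rfl⟩; exact ⟨hCzero, map_zero f⟩
  have hface_cone : ∀ D, IsFace d C D → ∀ c : ℝ, 0 ≤ c → ∀ x ∈ D, c • x ∈ D := by
    rintro D ⟨f, hf, rfl⟩ c hc x hx
    exact ⟨hCsmul c hc x hx.1, by rw [map_smul, hx.2, smul_zero]⟩
  have hface_add : ∀ D, IsFace d C D → ∀ x ∈ D, ∀ y ∈ D, x + y ∈ D := by
    rintro D ⟨f, hf, rfl⟩ x hx y hy
    exact ⟨hCadd _ hx.1 _ hy.1, by rw [map_add, hx.2, hy.2, add_zero]⟩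
  have hface_convex : ∀ D, IsFace d C D → Convex ℝ D := by
    intro D hD x hx y hy a b ha hb _
    exact hface_add D hD _ (hface_cone D hD a ha x hx) _ (hface_cone D hD b hb y hy)
  have hfaceC : IsFace d C C := ⟨0, by simp, by ext x; simp⟩
  -- strict monotonicity of spans of faces
  have hstrict : ∀ D D', IsFace d C D → IsFace d C D' → D ⊂ D' →
      Module.finrank ℝ (Submodule.span ℝ D) < Module.finrank ℝ (Submodule.span ℝ D') := by
    rintro D D' hD hD' hss
    obtain ⟨f, hf, hDeq⟩ := hD
    obtain ⟨x₀, hx₀D', hx₀D⟩ := Set.exists_of_ssubset hss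
    have hkerD : Submodule.span ℝ D ≤ LinearMap.ker f := by
      rw [Submodule.span_le]
      intro y hy
      rw [hDeq] at hy
      exact hy.2
    have hfx₀ : f x₀ ≠ 0 := by
      intro h
      exact hx₀D (hDeq ▸ ⟨hface_sub D' hD' hx₀D', h⟩)
    apply Submodule.finrank_lt_finrank_of_lt
    refine lt_of_le_of_ne (Submodule.span_mono hss.subset) (fun heq => ?_)
    have : x₀ ∈ Submodule.span ℝ D := heq ▸ Submodule.subset_span hx₀D'
    exact hfx₀ (hkerD this)
  -- key induction
  have key : ∀ n : ℕ, ∀ D, IsFace d C D → emb d u ∈ D →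
      d - Module.finrank ℝ (Submodule.span ℝ D) < n → u ∈ latticeOf d S D := by
    intro n
    induction n with
    | zero => intro D _ _ h; exact absurd h (Nat.not_lt_zero _)
    | succ n ih =>
      intro D hD huD hlt
      by_cases hrs : IsRelSat d S C D
      · obtain ⟨-, hne, heq⟩ := hrs
        rw [heq]
        refine AddSubgroup.mem_inf.mpr ⟨?_, ?_⟩
        · rw [AddSubgroup.mem_iInf]
          intro D'
          rw [AddSubgroup.mem_iInf]
          rintro ⟨hD'face, hss⟩
          apply ih D' hD'face (hss.subset huD)
          have h1 := hstrict D D' hD hD'face hss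
          have h2 : Module.finrank ℝ (Submodule.span ℝ D') ≤ d := by
            have := Submodule.finrank_le (Submodule.span ℝ D')
            simpa [Module.finrank_fin_fun] using this
          omega
        · simp only [latIn, AddSubgroup.mem_comap, Submodule.mem_toAddSubgroup]
          exact Submodule.subset_span huD
      · exact H D ⟨hD, hrs⟩ huD
  -- finite generating set of the cone
  obtain ⟨Tf, hTf⟩ := hfg
  set Gf : Finset (Fin d → ℝ) := Tf.image (fun m => emb d m) with hGf
  have hspan2 : Submodule.span NNReal (emb d '' (S : Set (Fin d → ℤ))) =
      Submodule.span NNReal (↑Gf : Set (Fin d → ℝ)) := by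
    apply le_antisymm
    · rw [Submodule.span_le]
      rintro _ ⟨m, hm, rfl⟩
      have hm' : m ∈ AddSubmonoid.closure (↑Tf : Set (Fin d → ℤ)) := by rw [hTf]; exact hm
      clear hm
      induction hm' using AddSubmonoid.closure_induction with
      | mem y hy =>
        exact Submodule.subset_span (by
          simp only [hGf, Finset.coe_image, Set.mem_image, Finset.mem_coe]
          exact ⟨y, hy, rfl⟩)
      | zero => simp only [map_zero]; exact Submodule.zero_mem _
      | add a b _ _ ha hb => simp only [map_add]; exact Submodule.add_mem _ ha hb
    · apply Submodule.span_mono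
      rintro w hw
      simp only [hGf, Finset.coe_image, Set.mem_image, Finset.mem_coe] at hw
      obtain ⟨m, hm, rfl⟩ := hw
      exact ⟨m, by rw [← hTf]; exact AddSubmonoid.subset_closure hm, rfl⟩
  have hCgen : C = ↑(Submodule.span NNReal (↑Gf : Set (Fin d → ℝ))) := by
    rw [hC]
    unfold coneOf
    rw [hspan2]
  have hGf_sub : ∀ w ∈ Gf, w ∈ C := by
    intro w hw
    rw [hCgen]
    exact Submodule.subset_span hw
  -- the set of supporting functionals vanishing at u
  set Φ : Set ((Fin d → ℝ) →ₗ[ℝ] ℝ) :=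
    {f | (∀ x ∈ C, 0 ≤ f x) ∧ f (emb d u) = 0} with hΦ
  obtain ⟨T, hTΦ, hTspan⟩ := exists_finset_span Φ
  set F : (Fin d → ℝ) →ₗ[ℝ] ℝ := ∑ f ∈ T, f with hF
  have hFapp : ∀ x, F x = ∑ f ∈ T, f x := by
    intro x
    rw [hF, LinearMap.coe_sum, Finset.sum_apply]
  have hFC : ∀ x ∈ C, 0 ≤ F x := by
    intro x hx
    rw [hFapp]
    exact Finset.sum_nonneg fun f hf => (hTΦ hf).1 x hx
  have hFu : F (emb d u) = 0 := by
    rw [hFapp]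
    exact Finset.sum_eq_zero fun f hf => (hTΦ hf).2
  set DM : Set (Fin d → ℝ) := {x ∈ C | F x = 0} with hDM
  have hfaceDM : IsFace d C DM := ⟨F, hFC, rfl⟩
  have huDM : emb d u ∈ DM := ⟨hu, hFu⟩
  have hvanish : ∀ x ∈ DM, ∀ f ∈ Φ, f x = 0 := by
    rintro x ⟨hxC, hFx⟩ f hf
    have hzero : ∀ g ∈ T, g x = 0 := by
      rw [hFapp] at hFx
      exact (Finset.sum_eq_zero_iff_of_nonneg fun g hg => (hTΦ hg).1 x hxC).1 hFx
    have hker : Submodule.span ℝ (↑T : Set ((Fin d → ℝ) →ₗ[ℝ] ℝ)) ≤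
        LinearMap.ker (LinearMap.applyₗ x) := by
      rw [Submodule.span_le]
      intro g hg
      simpa using hzero g hg
    simpa using hker (hTspan f hf)
  -- u lies in the intrinsic interior of DM
  have hmin : emb d u ∈ intrinsicInterior ℝ DM := by
    by_contra hni
    obtain ⟨g, hg0, hgu, y₀, hy₀, hy₀pos⟩ :=
      sep (hface_convex DM hfaceDM) (hface_zero DM hfaceDM)
        (hface_cone DM hfaceDM) huDM hni
    set lam : ℝ := ∑ w ∈ Gf, (if F w = 0 then 0 else max 0 (-(g w) / F w)) with hlam
    have hlam_term : ∀ w ∈ Gf, (0:ℝ) ≤ (if F w = 0 then 0 else max 0 (-(g w) / F w)) := by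
      intro w _
      split <;> simp [le_max_left]
    set f' : (Fin d → ℝ) →ₗ[ℝ] ℝ := g + lam • F with hf'
    have hf'app : ∀ x, f' x = g x + lam * F x := fun x => rfl
    have hgen : ∀ w ∈ (↑Gf : Set (Fin d → ℝ)), 0 ≤ f' w := by
      intro w hw
      rw [hf'app]
      by_cases hFw : F w = 0
      · have hwDM : w ∈ DM := ⟨hGf_sub w hw, hFw⟩
        have := hg0 w hwDM
        rw [hFw]
        linarith
      · have hFwpos : 0 < F w := lt_of_le_of_ne (hFC w (hGf_sub w hw)) (Ne.symm hFw)
        have hterm : -(g w) / F w ≤ lam := by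
          calc -(g w) / F w ≤ max 0 (-(g w) / F w) := le_max_right _ _
            _ = (if F w = 0 then 0 else max 0 (-(g w) / F w)) := by rw [if_neg hFw]
            _ ≤ lam := Finset.single_le_sum hlam_term hw
        have : -(g w) ≤ lam * F w := by
          rw [div_le_iff₀ hFwpos] at hterm
          linarith
        linarith
    have hf'C : ∀ x ∈ C, 0 ≤ f' x := by
      intro x hx
      rw [hCgen] at hx
      have hx' : x ∈ Submodule.span NNReal (↑Gf : Set (Fin d → ℝ)) := hx
      clear hx
      induction hx' using Submodule.span_induction with
      | mem w hw => exact hgen w hw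
      | zero => simp
      | add y z _ _ hy hz => rw [map_add]; exact add_nonneg hy hz
      | smul c y _ hy =>
        rw [NNReal.smul_def, map_smul, smul_eq_mul]
        exact mul_nonneg c.2 hy
    have hf'Φ : f' ∈ Φ := by
      refine ⟨hf'C, ?_⟩
      rw [hf'app, hgu, hFu]
      ring
    have hzero := hvanish y₀ hy₀ f' hf'Φ
    rw [hf'app, hy₀.2] at hzero
    -- hy₀ : y₀ ∈ DM so F y₀ = 0
    nlinarith
  -- conclude
  have hM := key (d - Module.finrank ℝ (Submodule.span ℝ DM) + 1) DM hfaceDM huDM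
    (Nat.lt_succ_self _)
  exact (hsn DM hfaceDM u hmin).2 hM

end
end
end

section
/- Let S be a seminormal affine monoid with cone C. For any face D of C, the lattice M_D equals the intersection over all relatively unsaturated faces D' containing D of M_{D'} ∩ span(D). -/
noncomputable section


noncomputable section

lemma latticeOf_mono (d : ℕ) (S : AddSubmonoid (Fin d → ℤ)) {D D' : Set (Fin d → ℝ)}
    (h : D ⊆ D') : latticeOf d S D ≤ latticeOf d S D' :=
  AddSubgroup.closure_mono (Set.inter_subset_inter_right _ (Set.preimage_mono h))

lemma latIn_mono (d : ℕ) {D D' : Set (Fin d → ℝ)} (h : D ⊆ D') :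
    latIn d D ≤ latIn d D' :=
  AddSubgroup.comap_mono (fun _ hx => Submodule.span_mono h hx)

lemma latticeOf_le_latIn (d : ℕ) (S : AddSubmonoid (Fin d → ℤ)) (D : Set (Fin d → ℝ)) :
    latticeOf d S D ≤ latIn d D := by
  rw [latticeOf, AddSubgroup.closure_le]
  intro x hx
  exact Submodule.subset_span hx.2

lemma face_subset {d : ℕ} {C D : Set (Fin d → ℝ)} (hD : IsFace d C D) : D ⊆ C := by
  obtain ⟨u, _, hEq⟩ := hD
  rw [hEq]; exact Set.sep_subset _ _

lemma face_span_lt {d : ℕ} {C D D' : Set (Fin d → ℝ)} (hD : IsFace d C D)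
    (hD' : IsFace d C D') (h : D ⊂ D') :
    Submodule.span ℝ D < Submodule.span ℝ D' := by
  refine lt_of_le_of_ne (Submodule.span_mono h.1) ?_
  intro heq
  obtain ⟨x, hxD', hxD⟩ := Set.exists_of_ssubset h
  obtain ⟨u, hu, hEq⟩ := hD
  have hspan : Submodule.span ℝ D ≤ LinearMap.ker u := by
    rw [Submodule.span_le]
    intro y hy
    have : u y = 0 := by rw [hEq] at hy; exact hy.2
    simpa [LinearMap.mem_ker] using this
  have hx0 : u x = 0 := by
    have : x ∈ Submodule.span ℝ D' := Submodule.subset_span hxD'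
    rw [← heq] at this
    exact hspan this
  exact hxD (by rw [hEq]; exact ⟨face_subset hD' hxD', hx0⟩)

lemma stmt_6_aux (d : ℕ) (S : AddSubmonoid (Fin d → ℤ)) (C : Set (Fin d → ℝ)) :
    ∀ n : ℕ, ∀ D : Set (Fin d → ℝ), IsFace d C D →
      d - Module.finrank ℝ (Submodule.span ℝ D) ≤ n →
    latticeOf d S D =
      (⨅ D' ∈ {D' : Set (Fin d → ℝ) | IsRUF d S C D' ∧ D ⊆ D'}, latticeOf d S D') ⊓
        latIn d D := by
  intro n
  induction n using Nat.strong_induction_on with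
  | _ n ih =>
    intro D hD hn
    refine le_antisymm (le_inf (le_iInf₂ fun D' hD' => latticeOf_mono d S hD'.2)
      (latticeOf_le_latIn d S D)) ?_
    by_cases hRS : IsRelSat d S C D
    · rw [hRS.2.2]
      refine le_inf (le_iInf₂ fun D' hD' => ?_) inf_le_right
      -- hD' : IsFace d C D' ∧ D ⊂ D'
      have hlt := face_span_lt hD hD'.1 hD'.2
      have hfr : Module.finrank ℝ (Submodule.span ℝ D) <
          Module.finrank ℝ (Submodule.span ℝ D') :=
        Submodule.finrank_lt_finrank_of_lt hlt
      have hle : Module.finrank ℝ (Submodule.span ℝ D') ≤ d :=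
        (Submodule.finrank_le _).trans_eq (by simp)
      have hm : d - Module.finrank ℝ (Submodule.span ℝ D') < n := by omega
      rw [ih _ hm D' hD'.1 le_rfl]
      refine le_inf (le_iInf₂ fun D'' hD'' => ?_)
        (inf_le_right.trans (latIn_mono d hD'.2.1))
      exact inf_le_left.trans (iInf₂_le D'' ⟨hD''.1, hD'.2.1.trans hD''.2⟩)
    · exact inf_le_left.trans (iInf₂_le D ⟨⟨hD, hRS⟩, subset_rfl⟩)

/-- For a seminormal affine monoid `S` with pointed cone `C` and any face `D` of `C`,
the lattice `M_D = ℤ(S ∩ D)` equals the intersection, over all relatively unsaturated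
faces `D'` containing `D`, of `M_{D'} ∩ span(D)`. -/
theorem stmt_6 (d : ℕ) (S : AddSubmonoid (Fin d → ℤ)) (hfg : S.FG)
    (hZ : AddSubgroup.closure (S : Set (Fin d → ℤ)) = ⊤)
    (C : Set (Fin d → ℝ)) (hC : C = coneOf d S)
    (hpointed : ∀ x ∈ C, -x ∈ C → x = 0)
    (hsn : Seminormal d S C)
    (D : Set (Fin d → ℝ)) (hD : IsFace d C D) :
    latticeOf d S D =
      (⨅ D' ∈ {D' : Set (Fin d → ℝ) | IsRUF d S C D' ∧ D ⊆ D'}, latticeOf d S D') ⊓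
        latIn d D :=
  stmt_6_aux d S C (d - Module.finrank ℝ (Submodule.span ℝ D)) D hD le_rfl

end
end
end

section
/- Let M = ℤ^n, C a full-dimensional pointed rational cone in ℝ^n with dual cone σ, and q = p^e. For a ∈ (1/q)M, the map π_a: k[(1/q)M] → k[M] sending x^u to x^{a+u} if a+u ∈ M and to 0 otherwise, restricts to a k[C ∩ M]-module homomorphism from (1/q)(C∩M)-graded piece to k[C ∩ M] if and only if ⟨a, v_ρ⟩ > -1 for every primitive generator v_ρ of every extremal ray ρ of σ. -/
noncomputable section


noncomputable section

lemma bezout_fin {d : ℕ} (f : Fin d → ℤ) :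
    ∀ s : Finset (Fin d), ∃ w : Fin d → ℤ,
      ∑ i ∈ s, w i * f i = ((s.gcd fun i => (f i).natAbs : ℕ) : ℤ) := by
  intro s
  induction s using Finset.induction_on with
  | empty => exact ⟨0, by simp⟩
  | insert b s' ha ih =>
    obtain ⟨w, hw⟩ := ih
    set G : ℕ := s'.gcd fun i => (f i).natAbs with hG
    refine ⟨fun i => if i = b then Int.gcdA (f b) G else Int.gcdB (f b) G * w i, ?_⟩
    rw [Finset.sum_insert ha, Finset.gcd_insert]
    have h1 : ∑ i ∈ s', (if i = b then Int.gcdA (f b) G else Int.gcdB (f b) G * w i) * f i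
        = Int.gcdB (f b) G * ∑ i ∈ s', w i * f i := by
      rw [Finset.mul_sum]
      refine Finset.sum_congr rfl fun i hi => ?_
      rw [if_neg (by rintro rfl; exact ha hi), mul_assoc]
    rw [h1, hw]
    beta_reduce
    rw [if_pos rfl]
    have h2 : Int.gcd (f b) (G : ℤ) = Nat.gcd (f b).natAbs G := by simp [Int.gcd]
    have h3 := Int.gcd_eq_gcd_ab (f b) (G : ℤ)
    rw [h2] at h3
    have h4 : GCDMonoid.gcd ((f b).natAbs) G = Nat.gcd (f b).natAbs G := rfl
    rw [h4]
    linarith [h3]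

-- rational point in an open set
lemma exists_rat_vec_mem {d : ℕ} {U : Set (Fin d → ℝ)} (hU : IsOpen U) (hne : U.Nonempty) :
    ∃ r : Fin d → ℚ, (fun i => (r i : ℝ)) ∈ U := by
  have hD : Dense (Set.pi Set.univ fun _ : Fin d => Set.range ((↑) : ℚ → ℝ)) :=
    dense_pi Set.univ fun i _ => Rat.denseRange_cast
  obtain ⟨x, hx, hxU⟩ := hD.exists_mem_open hU hne
  choose r hr using fun i => hx i (Set.mem_univ i)
  exact ⟨r, by simpa [funext hr] using hxU⟩

/-- Criterion of Payne for the normal case: let `C ⊂ ℝ^d` be a full-dimensional pointed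
rational cone cut out by the primitive generators `v j` of the extremal rays of its dual
cone, `S̄ = C ∩ ℤ^d`, and `q = p^e`.  For `a ∈ (1/q)ℤ^d` (encoded by its numerator
vector `a`, the point being `a/q`), the map `π_a` restricts to a homomorphism
`F^e_* k[S̄] → k[S̄]`, i.e. `(a + (1/q)S̄) ∩ M ⊆ S̄`, if and only if
`⟨a/q, v j⟩ > -1`, i.e. `⟨a, v j⟩ > -q`, for every `j`. -/
theorem stmt_9 (d m : ℕ) (p : ℕ) (hp : p.Prime) (e : ℕ) (q : ℕ) (hq : q = p ^ e)
    (v : Fin m → Fin d → ℤ)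
    (hprim : ∀ j, Finset.univ.gcd (fun i => (v j i).natAbs) = 1)
    (C : Set (Fin d → ℝ))
    (hC : C = {x : Fin d → ℝ | ∀ j, 0 ≤ ∑ i, x i * (v j i : ℝ)})
    (hfulldim : Submodule.span ℝ C = ⊤)
    (hpointed : ∀ x ∈ C, -x ∈ C → x = 0)
    (hfacet : ∀ j, ∃ x ∈ C, (∑ i, x i * (v j i : ℝ)) = 0 ∧
      ∀ j', j' ≠ j → 0 < ∑ i, x i * (v j' i : ℝ))
    (a : Fin d → ℤ) :
    (∀ u : Fin d → ℤ, emb d u ∈ C → (∀ i, (q : ℤ) ∣ a i + u i) →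
        emb d (fun i => (a i + u i) / (q : ℤ)) ∈ C)
      ↔ (∀ j, -(q : ℤ) < ∑ i, a i * v j i) := by
  have hq0 : 0 < (q : ℤ) := by
    have : 0 < q := hq ▸ Nat.pow_pos (n := e) hp.pos
    exact_mod_cast this
  have hqne : (q : ℤ) ≠ 0 := ne_of_gt hq0
  -- membership criterion over ℤ
  have hmem : ∀ t : Fin d → ℤ, (emb d t ∈ C ↔ ∀ j', (0:ℤ) ≤ ∑ i, t i * v j' i) := by
    intro t
    rw [hC]
    simp only [Set.mem_setOf_eq]
    constructor
    · intro h j'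
      have := h j'
      have he : ∑ i, emb d t i * (v j' i : ℝ) = ((∑ i, t i * v j' i : ℤ) : ℝ) := by
        push_cast [emb]; rfl
      rw [he] at this
      exact_mod_cast this
    · intro h j'
      have he : ∑ i, emb d t i * (v j' i : ℝ) = ((∑ i, t i * v j' i : ℤ) : ℝ) := by
        push_cast [emb]; rfl
      rw [he]
      exact_mod_cast h j'
  constructor
  · -- forward: contrapose
    intro H
    by_contra hcon
    push_neg at hcon
    obtain ⟨j, hj⟩ := hcon
    have hj : ∑ i, a i * v j i ≤ -(q:ℤ) := by linarith
    -- Bezout vector w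
    obtain ⟨w, hw⟩ := bezout_fin (v j) Finset.univ
    rw [hprim j] at hw
    push_cast at hw
    -- facet point
    obtain ⟨x, hxC, hxj, hxj'⟩ := hfacet j
    -- rational approximation
    set g : Fin m → (Fin d → ℝ) → ℝ := fun j' r =>
      (∑ i, r i * (v j' i : ℝ)) - (∑ i, r i * (v j i : ℝ)) * (∑ i, (w i : ℝ) * (v j' i : ℝ))
      with hg
    have hgc : ∀ j', Continuous (g j') := by
      intro j'
      apply Continuous.sub
      · exact continuous_finset_sum _ fun i _ => (continuous_apply i).mul continuous_const
      · exact ((continuous_finset_sum _ fun i _ => (continuous_apply i).mul continuous_const).mul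
          continuous_const)
    set U : Set (Fin d → ℝ) := ⋂ j' ∈ (Finset.univ.erase j), {r | 0 < g j' r} with hU
    have hUopen : IsOpen U := by
      apply isOpen_biInter_finset
      intro j' _
      exact isOpen_lt continuous_const (hgc j')
    have hUne : U.Nonempty := by
      refine ⟨x, ?_⟩
      simp only [hU, Set.mem_iInter, Set.mem_setOf_eq]
      intro j' hj'
      have : j' ≠ j := (Finset.mem_erase.mp hj').1
      have := hxj' j' this
      simp only [hg, hxj, zero_mul, sub_zero]
      exact this
    obtain ⟨r, hr⟩ := exists_rat_vec_mem hUopen hUne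
    -- rational vector in the hyperplane
    set c : ℚ := ∑ i, r i * (v j i : ℚ) with hc
    set s : Fin d → ℚ := fun i => r i - c * w i with hs
    have hsj : ∑ i, s i * (v j i : ℚ) = 0 := by
      simp only [hs, sub_mul, Finset.sum_sub_distrib, mul_assoc, ← Finset.mul_sum]
      have hwq : ∑ i, (w i : ℚ) * (v j i : ℚ) = 1 := by exact_mod_cast hw
      rw [hwq, mul_one, ← hc, sub_self]
    have hsj' : ∀ j', j' ≠ j → 0 < ∑ i, s i * (v j' i : ℚ) := by
      intro j' hne
      have hmem' : (fun i => (r i : ℝ)) ∈ {r | 0 < g j' r} := by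
        have := hr
        simp only [hU, Set.mem_iInter] at this
        exact this j' (Finset.mem_erase.mpr ⟨hne, Finset.mem_univ j'⟩)
      have hgval : (↑(∑ i, s i * (v j' i : ℚ)) : ℝ) = g j' (fun i => (r i : ℝ)) := by
        simp only [hs, hg, hc]
        push_cast
        simp only [sub_mul, Finset.sum_sub_distrib, mul_assoc, ← Finset.mul_sum]
      have : (0:ℝ) < (↑(∑ i, s i * (v j' i : ℚ)) : ℝ) := by
        rw [hgval]; exact hmem'
      exact_mod_cast this
    -- clear denominators
    set N : ℕ := ∏ i, (s i).den with hN
    have hNpos : 0 < N := Finset.prod_pos fun i _ => (s i).pos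
    have hdvd : ∀ i : Fin d, ∃ ci : ℤ, (N : ℤ) = ((s i).den : ℤ) * ci := by
      intro i
      have : (s i).den ∣ N := Finset.dvd_prod_of_mem _ (Finset.mem_univ i)
      obtain ⟨ci, hci⟩ := this
      exact ⟨ci, by exact_mod_cast hci⟩
    choose ci hci using hdvd
    set y : Fin d → ℤ := fun i => (s i).num * ci i with hy
    have hyq : ∀ i, ((y i : ℚ)) = s i * N := by
      intro i
      have hden : ((s i).den : ℚ) ≠ 0 := Nat.cast_ne_zero.mpr (s i).den_ne_zero
      have h1 : (N : ℚ) = ((s i).den : ℚ) * (ci i : ℚ) := by exact_mod_cast hci i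
      have h2 : s i * ((s i).den : ℚ) = ((s i).num : ℚ) := by
        nth_rewrite 1 [← Rat.num_div_den (s i)]
        exact div_mul_cancel₀ _ hden
      calc ((y i : ℚ)) = ((s i).num : ℚ) * (ci i : ℚ) := by rw [hy]; push_cast; ring
        _ = (s i * ((s i).den : ℚ)) * ci i := by rw [h2]
        _ = s i * N := by rw [h1]; ring
    have key : ∀ j'', ((∑ i, y i * v j'' i : ℤ) : ℚ) = N * ∑ i, s i * ((v j'' i : ℤ) : ℚ) := by
      intro j''
      rw [Int.cast_sum, Finset.mul_sum]
      refine Finset.sum_congr rfl fun i _ => ?_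
      rw [Int.cast_mul, hyq i]
      ring
    have hyj : ∑ i, y i * v j i = 0 := by
      have : ((∑ i, y i * v j i : ℤ) : ℚ) = 0 := by rw [key j, hsj, mul_zero]
      exact_mod_cast this
    have hyj' : ∀ j', j' ≠ j → 1 ≤ ∑ i, y i * v j' i := by
      intro j' hne
      have : (0:ℚ) < ((∑ i, y i * v j' i : ℤ) : ℚ) := by
        rw [key j']
        exact mul_pos (by exact_mod_cast hNpos) (hsj' j' hne)
      have h0 : (0:ℤ) < ∑ i, y i * v j' i := by exact_mod_cast this
      omega
    -- the big constant
    set N2 : ℕ := Finset.univ.sup fun j' =>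
      (∑ i, a i * v j' i + (q:ℤ) * ∑ i, w i * v j' i).toNat with hN2
    set u : Fin d → ℤ := fun i => -a i - (q:ℤ) * w i + (q:ℤ) * N2 * y i with hu
    -- linear algebra of pairings
    have hupair : ∀ j', ∑ i, u i * v j' i =
        -(∑ i, a i * v j' i) - (q:ℤ) * ∑ i, w i * v j' i + (q:ℤ) * N2 * ∑ i, y i * v j' i := by
      intro j'
      simp only [hu, add_mul, sub_mul, neg_mul, Finset.sum_add_distrib, Finset.sum_sub_distrib,
        Finset.sum_neg_distrib, mul_assoc, ← Finset.mul_sum]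
    have huC : emb d u ∈ C := by
      rw [hmem]
      intro j'
      rw [hupair j']
      by_cases hjj : j' = j
      · subst hjj
        rw [hw, hyj, mul_zero, mul_one]
        linarith
      · have h1 : 1 ≤ ∑ i, y i * v j' i := hyj' j' hjj
        have h2 : (∑ i, a i * v j' i + (q:ℤ) * ∑ i, w i * v j' i) ≤ (N2:ℤ) := by
          have := Finset.le_sup (f := fun j' =>
            (∑ i, a i * v j' i + (q:ℤ) * ∑ i, w i * v j' i).toNat) (Finset.mem_univ j')
          calc (∑ i, a i * v j' i + (q:ℤ) * ∑ i, w i * v j' i)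
              ≤ ((∑ i, a i * v j' i + (q:ℤ) * ∑ i, w i * v j' i).toNat : ℤ) := Int.self_le_toNat _
            _ ≤ (N2 : ℤ) := by exact_mod_cast this
        have h3 : (N2:ℤ) ≤ (q:ℤ) * N2 := le_mul_of_one_le_left (Int.natCast_nonneg N2) hq0
        have h4 : (q:ℤ) * N2 ≤ (q:ℤ) * N2 * ∑ i, y i * v j' i := by
          nlinarith [Int.natCast_nonneg N2, hq0.le]
        linarith
    have hudvd : ∀ i, (q:ℤ) ∣ a i + u i := by
      intro i
      have : a i + u i = (q:ℤ) * (-w i + N2 * y i) := by rw [hu]; ring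
      exact ⟨_, this⟩
    have hquot : (fun i => (a i + u i) / (q:ℤ)) = fun i => -w i + N2 * y i := by
      funext i
      have : a i + u i = (q:ℤ) * (-w i + N2 * y i) := by rw [hu]; ring
      rw [this, Int.mul_ediv_cancel_left _ hqne]
    have := H u huC hudvd
    rw [hquot, hmem] at this
    have hcontra := this j
    have : ∑ i, (-w i + (N2:ℤ) * y i) * v j i = -1 := by
      simp only [add_mul, neg_mul, Finset.sum_add_distrib, Finset.sum_neg_distrib, mul_assoc,
        ← Finset.mul_sum, hw, hyj, mul_zero, add_zero]
    omega
  · -- reverse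
    intro h u huC hdiv
    rw [hmem] at huC ⊢
    intro j'
    beta_reduce
    have htq : ∀ i, (q:ℤ) * ((a i + u i) / (q:ℤ)) = a i + u i := fun i =>
      Int.mul_ediv_cancel' (hdiv i)
    have hsum : (q:ℤ) * ∑ i, ((a i + u i) / (q:ℤ)) * v j' i
        = ∑ i, a i * v j' i + ∑ i, u i * v j' i := by
      rw [Finset.mul_sum, ← Finset.sum_add_distrib]
      refine Finset.sum_congr rfl fun i _ => ?_
      rw [← mul_assoc, htq i]; ring
    have h1 : -(q:ℤ) < (q:ℤ) * ∑ i, ((a i + u i) / (q:ℤ)) * v j' i := by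
      rw [hsum]
      have := h j'
      have := huC j'
      linarith
    by_contra hneg
    push_neg at hneg
    have h2 : ∑ i, ((a i + u i) / (q:ℤ)) * v j' i ≤ -1 := by omega
    have h3 := mul_le_mul_of_nonneg_left h2 hq0.le
    linarith


end
end
end

section
/- Let C be a full-dimensional pointed rational cone in M_ℝ with dual cone σ, and let ρ be an extremal ray of σ with primitive generator v_ρ. For any a ∈ (1/q)M there exists w ∈ M with ⟨w, v_ρ⟩ = -1 and ⟨w, v_{ρ'}⟩ > ⟨a, v_{ρ'}⟩ for all extremal rays ρ' ≠ ρ of σ. -/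
noncomputable section


noncomputable section

lemma sign_mul_self' (a : ℤ) : a.sign * a = (a.natAbs : ℤ) := by
  rcases lt_trichotomy a 0 with h | h | h
  · rw [Int.sign_eq_neg_one_of_neg h]; omega
  · simp [h]
  · rw [Int.sign_eq_one_of_pos h]; omega

lemma bezout_finset {ι : Type*} [DecidableEq ι] (s : Finset ι) (f : ι → ℤ) :
    ∃ w : ι → ℤ, ∑ i ∈ s, w i * f i = ((s.gcd (fun i => (f i).natAbs) : ℕ) : ℤ) := by
  induction s using Finset.induction_on with
  | empty => exact ⟨0, by simp⟩
  | insert a s ha ih =>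
    obtain ⟨w, hw⟩ := ih
    set g := s.gcd (fun i => (f i).natAbs) with hg
    refine ⟨fun i => if i = a then (f a).sign * Nat.gcdA (f a).natAbs g
      else w i * Nat.gcdB (f a).natAbs g, ?_⟩
    rw [Finset.sum_insert ha, Finset.gcd_insert]
    have h2 : ∀ i ∈ s, (if i = a then (f a).sign * Nat.gcdA (f a).natAbs g
        else w i * Nat.gcdB (f a).natAbs g) * f i = (w i * f i) * Nat.gcdB (f a).natAbs g := by
      intro i hi
      rw [if_neg (by rintro rfl; exact ha hi)]; ring
    rw [Finset.sum_congr rfl h2, ← Finset.sum_mul, hw]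
    simp only [if_pos rfl, if_true]
    have hgcd : gcd ((f a).natAbs) g = Nat.gcd ((f a).natAbs) g := rfl
    rw [hgcd, Nat.gcd_eq_gcd_ab]
    linear_combination (Nat.gcdA (f a).natAbs g) * sign_mul_self' (f a)


lemma sum_if_split {K : Type*} [Field K] {d : ℕ} (i₀ : Fin d) (c z : Fin d → K) (A : K) :
    ∑ i, (if i = i₀ then A else z i) * c i
      = A * c i₀ + ∑ i ∈ Finset.univ.erase i₀, z i * c i := by
  rw [← Finset.add_sum_erase _ (fun i => (if i = i₀ then A else z i) * c i)
    (Finset.mem_univ i₀)]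
  simp only [if_pos rfl]
  congr 1
  exact Finset.sum_congr rfl fun i hi => by rw [if_neg (Finset.ne_of_mem_erase hi)]

lemma Tsum {K : Type*} [Field K] {d : ℕ} (i₀ : Fin d) (c : Fin d → K) (hc : c i₀ ≠ 0)
    (z : Fin d → K) :
    ∑ i, (if i = i₀ then -(∑ k ∈ Finset.univ.erase i₀, z k * c k) / c i₀ else z i) * c i = 0 := by
  rw [sum_if_split]
  field_simp
  ring

lemma exists_int_point (d m : ℕ) (v : Fin m → Fin d → ℤ) (j₀ : Fin m) (i₀ : Fin d) (hi₀ : v j₀ i₀ ≠ 0)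
    (x : Fin d → ℝ) (hx0 : (∑ i, x i * (v j₀ i : ℝ)) = 0)
    (hxpos : ∀ j', j' ≠ j₀ → 0 < ∑ i, x i * (v j' i : ℝ)) :
    ∃ y : Fin d → ℤ, (∑ i, y i * v j₀ i) = 0 ∧ ∀ j, j ≠ j₀ → 0 < ∑ i, y i * v j i := by
  classical
  have hcR : ((v j₀ i₀ : ℝ)) ≠ 0 := by exact_mod_cast hi₀
  have hcQ : ((v j₀ i₀ : ℚ)) ≠ 0 := by exact_mod_cast hi₀
  set T : (Fin d → ℝ) → Fin d → ℝ := fun z i =>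
    if i = i₀ then -(∑ k ∈ Finset.univ.erase i₀, z k * (v j₀ k : ℝ)) / (v j₀ i₀ : ℝ) else z i
    with hT
  have hTx : T x = x := by
    funext i
    by_cases h : i = i₀
    · subst h
      simp only [hT, if_pos rfl]
      have h0 : x i * (v j₀ i : ℝ) + ∑ k ∈ Finset.univ.erase i, x k * (v j₀ k : ℝ) = 0 := by
        rw [Finset.add_sum_erase _ (fun k => x k * (v j₀ k : ℝ)) (Finset.mem_univ i)]
        exact hx0
      field_simp
      linarith
    · simp only [hT, if_neg h]
  have hTcont : Continuous T := by
    refine continuous_pi fun i => ?_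
    by_cases h : i = i₀
    · simp only [hT, if_pos h]
      exact ((continuous_finset_sum (Finset.univ.erase i₀) fun k _ =>
        (continuous_apply k).mul continuous_const).neg).div_const _
    · simp only [hT, if_neg h]
      exact continuous_apply i
  set U : Set (Fin d → ℝ) :=
    ⋂ j ∈ Finset.univ.erase j₀, {y : Fin d → ℝ | 0 < ∑ i, y i * (v j i : ℝ)} with hU
  have hUopen : IsOpen U := by
    refine isOpen_biInter_finset fun j _ => ?_
    have : {y : Fin d → ℝ | 0 < ∑ i, y i * (v j i : ℝ)} =
        (fun y : Fin d → ℝ => ∑ i, y i * (v j i : ℝ)) ⁻¹' Set.Ioi 0 := rfl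
    rw [this]
    exact (continuous_finset_sum Finset.univ fun i _ =>
      (continuous_apply i).mul continuous_const).isOpen_preimage _ isOpen_Ioi
  have hxU : x ∈ U := by
    simp only [hU, Set.mem_iInter]
    intro j hj
    exact hxpos j (Finset.ne_of_mem_erase hj)
  have hVopen : IsOpen (T ⁻¹' U) := hUopen.preimage hTcont
  have hxV : x ∈ T ⁻¹' U := by simp only [Set.mem_preimage, hTx]; exact hxU
  have hd : Dense (Set.pi Set.univ fun _ : Fin d => Set.range ((↑) : ℚ → ℝ)) :=
    dense_pi _ fun i _ => Rat.denseRange_cast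
  obtain ⟨z, hzV, hzQ⟩ := hd.inter_open_nonempty _ hVopen ⟨x, hxV⟩
  choose r hr using fun i => hzQ i (Set.mem_univ i)
  set s : Fin d → ℚ := fun i =>
    if i = i₀ then -(∑ k ∈ Finset.univ.erase i₀, r k * (v j₀ k : ℚ)) / (v j₀ i₀ : ℚ) else r i
    with hs
  have hs_cast : ∀ i, ((s i : ℚ) : ℝ) = T z i := by
    intro i
    by_cases h : i = i₀
    · subst h
      simp only [hs, hT, if_pos rfl]
      push_cast
      rw [Finset.sum_congr rfl (fun k _ => by rw [hr k])]
    · simp only [hs, hT, if_neg h]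
      exact hr i
  have hsum0 : ∑ i, s i * (v j₀ i : ℚ) = 0 := Tsum i₀ (fun i => (v j₀ i : ℚ)) hcQ r
  have hspos : ∀ j, j ≠ j₀ → 0 < ∑ i, s i * (v j i : ℚ) := by
    intro j hj
    have hTzU : T z ∈ U := hzV
    have : 0 < ∑ i, (T z) i * (v j i : ℝ) := by
      simp only [hU, Set.mem_iInter] at hTzU
      exact hTzU j (Finset.mem_erase.mpr ⟨hj, Finset.mem_univ j⟩)
    rw [Finset.sum_congr rfl (fun i _ => by rw [← hs_cast i])] at this
    exact_mod_cast this
  -- clear denominators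
  set D : ℕ := ∏ i, (s i).den with hD
  have hDpos : 0 < (D : ℚ) := by
    have : 0 < D := Finset.prod_pos fun i _ => (s i).pos
    exact_mod_cast this
  set y : Fin d → ℤ := fun i => (s i).num * ∏ k ∈ Finset.univ.erase i, ((s k).den : ℤ) with hy
  have hyq : ∀ i, (y i : ℚ) = s i * D := by
    intro i
    have hden : ((s i).den : ℚ) ≠ 0 := by exact_mod_cast (s i).den_nz
    have h1 : ((s i).num : ℚ) = s i * ((s i).den : ℚ) :=
      (div_eq_iff hden).mp (Rat.num_div_den _)
    simp only [hy, hD]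
    push_cast
    have h2 : ((s i).den : ℚ) * ∏ k ∈ Finset.univ.erase i, ((s k).den : ℚ)
        = ∏ k, ((s k).den : ℚ) := Finset.mul_prod_erase Finset.univ (fun k => ((s k).den : ℚ)) (Finset.mem_univ i)
    rw [h1, mul_assoc, h2]
  have key : ∀ j, ((∑ i, y i * v j i : ℤ) : ℚ) = D * ∑ i, s i * (v j i : ℚ) := by
    intro j
    push_cast
    rw [Finset.sum_congr rfl (fun i _ => by rw [hyq i]), Finset.mul_sum]
    exact Finset.sum_congr rfl fun i _ => by ring
  refine ⟨y, ?_, ?_⟩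
  · have := key j₀
    rw [hsum0, mul_zero] at this
    exact_mod_cast this
  · intro j hj
    have : (0 : ℚ) < ((∑ i, y i * v j i : ℤ) : ℚ) := by
      rw [key j]; exact mul_pos hDpos (hspos j hj)
    exact_mod_cast this

/-- Claim (†): let `C ⊂ ℝ^d` be a full-dimensional pointed rational cone cut out by the
primitive generators `v j` of the extremal rays of its dual cone.  For any positive
integer `q`, any `a ∈ (1/q)ℤ^d` (encoded by its numerator vector), and any fixed ray
index `j₀`, there is `w ∈ ℤ^d` with `⟨w, v j₀⟩ = -1` and `⟨w, v j⟩ > ⟨a/q, v j⟩` for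
all `j ≠ j₀`. -/
theorem stmt_10 (d m : ℕ) (v : Fin m → Fin d → ℤ)
    (hprim : ∀ j, Finset.univ.gcd (fun i => (v j i).natAbs) = 1)
    (C : Set (Fin d → ℝ))
    (hC : C = {x : Fin d → ℝ | ∀ j, 0 ≤ ∑ i, x i * (v j i : ℝ)})
    (hfulldim : Submodule.span ℝ C = ⊤)
    (hpointed : ∀ x ∈ C, -x ∈ C → x = 0)
    (hfacet : ∀ j, ∃ x ∈ C, (∑ i, x i * (v j i : ℝ)) = 0 ∧
      ∀ j', j' ≠ j → 0 < ∑ i, x i * (v j' i : ℝ))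
    (q : ℕ) (hq : 0 < q) (a : Fin d → ℤ) (j₀ : Fin m) :
    ∃ w : Fin d → ℤ, (∑ i, w i * v j₀ i) = -1 ∧
      ∀ j, j ≠ j₀ → (∑ i, a i * v j i) < (q : ℤ) * ∑ i, w i * v j i := by
  classical
  obtain ⟨x, _hxC, hx0, hxpos⟩ := hfacet j₀
  have hi : ∃ i₀, v j₀ i₀ ≠ 0 := by
    by_contra h
    push_neg at h
    have h0 : Finset.univ.gcd (fun i => (v j₀ i).natAbs) = 0 :=
      Finset.gcd_eq_zero_iff.mpr fun i _ => by simp [h i]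
    have h1 := hprim j₀
    rw [h0] at h1
    exact one_ne_zero h1.symm
  obtain ⟨i₀, hi₀⟩ := hi
  obtain ⟨y, hy0, hypos⟩ := exists_int_point d m v j₀ i₀ hi₀ x hx0 hxpos
  obtain ⟨w₁, hw₁⟩ := bezout_finset Finset.univ (v j₀)
  rw [hprim j₀] at hw₁
  have hw₁' : ∑ i, w₁ i * v j₀ i = 1 := by exact_mod_cast hw₁
  set N : ℤ := ((Finset.univ.sup fun j =>
      ((∑ i, a i * v j i) + (q : ℤ) * ∑ i, w₁ i * v j i).toNat : ℕ) : ℤ) + 1 with hN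
  have hN0 : 0 ≤ N := by positivity
  have hsplit : ∀ j, ∑ i, (-w₁ i + N * y i) * v j i
      = -(∑ i, w₁ i * v j i) + N * ∑ i, y i * v j i := by
    intro j
    rw [Finset.mul_sum, ← Finset.sum_neg_distrib, ← Finset.sum_add_distrib]
    exact Finset.sum_congr rfl fun i _ => by ring
  refine ⟨fun i => -w₁ i + N * y i, ?_, ?_⟩
  · show ∑ i, (-w₁ i + N * y i) * v j₀ i = -1
    rw [hsplit j₀, hw₁', hy0]
    ring
  · intro j hj
    show (∑ i, a i * v j i) < (q : ℤ) * ∑ i, (-w₁ i + N * y i) * v j i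
    rw [hsplit j]
    have h1 : 1 ≤ ∑ i, y i * v j i := hypos j hj
    have h2 : (∑ i, a i * v j i) + (q : ℤ) * ∑ i, w₁ i * v j i < N := by
      have ha := Int.self_le_toNat ((∑ i, a i * v j i) + (q : ℤ) * ∑ i, w₁ i * v j i)
      have hb : ((((∑ i, a i * v j i) + (q : ℤ) * ∑ i, w₁ i * v j i).toNat : ℕ) : ℤ)
          ≤ ((Finset.univ.sup fun j =>
            ((∑ i, a i * v j i) + (q : ℤ) * ∑ i, w₁ i * v j i).toNat : ℕ) : ℤ) := by
        exact_mod_cast Finset.le_sup (f := fun j => ((∑ i, a i * v j i) + (q : ℤ) * ∑ i, w₁ i * v j i).toNat) (Finset.mem_univ j)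
      rw [hN]
      linarith
    have h3 : 1 ≤ (q : ℤ) := by exact_mod_cast hq
    have h4 : 0 ≤ N * ((q : ℤ) * (∑ i, y i * v j i) - 1) :=
      mul_nonneg hN0 (by nlinarith)
    nlinarith [h1, h2, h3, hN0, h4]


end
end
end

section
/- Let S be a seminormal affine monoid with monoid algebra R = k[S] over a perfect field k of characteristic p, with normalization R̄ = k[S̄]. Every homomorphism π_a ∈ Hom_R(F^e_* R, R) extends (uniquely) to a homomorphism F^e_* R̄ → R̄; equivalently, if (a + (1/q)S) ∩ M ⊆ S then ⟨a, v_ρ⟩ > -1 for all primitive extremal ray generators v_ρ of the dual cone σ. -/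
noncomputable section


noncomputable section

/-- Every `π_a ∈ Hom_R(F^e_* R, R)` for a seminormal monoid algebra `R = k[S]` extends
to the normalization: if `(a + (1/q)S) ∩ M ⊆ S` (with `q = p^e` and `a ∈ (1/q)ℤ^d`
encoded by its numerator vector), then `⟨a/q, v j⟩ > -1`, i.e. `⟨a, v j⟩ > -q`, for
every primitive extremal-ray generator `v j` of the dual cone of `C = ℝ_{≥0}S`. -/
theorem stmt_11 (d m : ℕ) (p : ℕ) (hp : p.Prime) (e : ℕ) (q : ℕ) (hq : q = p ^ e)
    (S : AddSubmonoid (Fin d → ℤ)) (hfg : S.FG)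
    (hZ : AddSubgroup.closure (S : Set (Fin d → ℤ)) = ⊤)
    (C : Set (Fin d → ℝ)) (hC : C = coneOf d S)
    (hpointed : ∀ x ∈ C, -x ∈ C → x = 0)
    (hsn : Seminormal d S C)
    (v : Fin m → Fin d → ℤ)
    (hprim : ∀ j, Finset.univ.gcd (fun i => (v j i).natAbs) = 1)
    (hdual : C = {x : Fin d → ℝ | ∀ j, 0 ≤ ∑ i, x i * (v j i : ℝ)})
    (hfacet : ∀ j, ∃ x ∈ C, (∑ i, x i * (v j i : ℝ)) = 0 ∧
      ∀ j', j' ≠ j → 0 < ∑ i, x i * (v j' i : ℝ))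
    (a : Fin d → ℤ)
    (hhom : ∀ s ∈ S, (∀ i, (q : ℤ) ∣ a i + s i) →
      (fun i => (a i + s i) / (q : ℤ)) ∈ S) :
    ∀ j, -(q : ℤ) < ∑ i, a i * v j i := by
  intro j
  by_contra hcon
  push_neg at hcon
  have hq0 : 0 < q := by rw [hq]; exact pow_pos hp.pos e
  have hq1 : (1:ℤ) ≤ (q:ℤ) := by exact_mod_cast hq0
  have hqz : (q:ℤ) ≠ 0 := by linarith
  have hpair : ∀ (w : Fin d → ℤ) (j' : Fin m),
      (∑ i, (emb d w) i * (v j' i : ℝ)) = ((∑ i, w i * v j' i : ℤ) : ℝ) := by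
    intro w j'
    push_cast
    rfl
  have hSsubC : ∀ w : Fin d → ℤ, w ∈ S → emb d w ∈ C := by
    intro w hw
    rw [hC]
    exact Submodule.subset_span (Set.mem_image_of_mem _ hw)
  have hSpair : ∀ w : Fin d → ℤ, w ∈ S → ∀ j', (0:ℤ) ≤ ∑ i, w i * v j' i := by
    intro w hw j'
    have h1 := hSsubC w hw
    rw [hdual] at h1
    have h2 := h1 j'
    rw [hpair] at h2
    exact_mod_cast h2
  -- a vector pairing to 1 with v j
  obtain ⟨g1, hg1⟩ : ∃ g1 : Fin d → ℤ, ∑ i, g1 i * v j i = 1 := by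
    set φ : (Fin d → ℤ) →+ ℤ :=
      { toFun := fun g => ∑ i, g i * v j i
        map_zero' := by simp
        map_add' := fun x y => by
          simp [add_mul, Finset.sum_add_distrib] } with hφ
    have hmem : ∀ i, v j i ∈ φ.range := by
      intro i
      refine ⟨Pi.single i 1, ?_⟩
      have hshow : φ (Pi.single i 1) = ∑ i', (Pi.single i 1 : Fin d → ℤ) i' * v j i' := rfl
      rw [hshow, Finset.sum_eq_single i]
      · simp
      · intro b _ hb; simp [Pi.single_eq_of_ne hb]
      · intro h; exact absurd (Finset.mem_univ i) h
    obtain ⟨g0, hg0⟩ := Int.subgroup_cyclic φ.range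
    have hdvd : ∀ i, g0 ∣ v j i := by
      intro i
      have h2 := hmem i
      rw [hg0, AddSubgroup.mem_closure_singleton] at h2
      obtain ⟨n, hn⟩ := h2
      exact ⟨n, by rw [← hn, zsmul_eq_mul, Int.cast_id]; ring⟩
    have hd1 : g0.natAbs = 1 := by
      have hh : g0.natAbs ∣ 1 := by
        rw [← hprim j]
        exact Finset.dvd_gcd fun i _ => Int.natAbs_dvd_natAbs.mpr (hdvd i)
      exact Nat.dvd_one.mp hh
    have h1 : (1:ℤ) ∈ φ.range := by
      rw [hg0, AddSubgroup.mem_closure_singleton]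
      rcases Int.natAbs_eq_iff.mp hd1 with h | h
      · exact ⟨1, by simp [h]⟩
      · exact ⟨-1, by simp [h]⟩
    obtain ⟨g1, hg1⟩ := h1
    exact ⟨g1, hg1⟩
  -- a lattice vector on the facet, strictly inside all other facets
  obtain ⟨z, hz0, hzpos⟩ : ∃ z : Fin d → ℤ,
      (∑ i, z i * v j i = 0) ∧ ∀ j', j' ≠ j → 1 ≤ ∑ i, z i * v j' i := by
    obtain ⟨x, hxC, hxj, hxj'⟩ := hfacet j
    have hx : x ∈ Submodule.span NNReal (emb d '' (S : Set (Fin d → ℤ))) := by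
      rw [hC] at hxC; exact hxC
    rw [Submodule.mem_span_set'] at hx
    obtain ⟨n, f, g, hsum⟩ := hx
    have hgS : ∀ t : Fin n, ∃ w, w ∈ (S : Set (Fin d → ℤ)) ∧ emb d w = (g t : Fin d → ℝ) :=
      fun t => (g t).2
    choose σ hσS hσe using hgS
    have hxpair : ∀ j', ∑ i, x i * (v j' i:ℝ)
        = ∑ t, (f t : ℝ) * ((∑ i, σ t i * v j' i : ℤ) : ℝ) := by
      intro j'
      have h1 : ∀ i, x i * (v j' i : ℝ) = ∑ t, (f t:ℝ) * ((σ t i:ℝ) * (v j' i:ℝ)) := by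
        intro i
        rw [← hsum]
        rw [Finset.sum_apply, Finset.sum_mul]
        refine Finset.sum_congr rfl fun t _ => ?_
        rw [Pi.smul_apply, NNReal.smul_def, ← hσe t]
        show (f t:ℝ) * (σ t i : ℝ) * (v j' i:ℝ) = _
        ring
      calc ∑ i, x i * (v j' i:ℝ) = ∑ i, ∑ t, (f t:ℝ) * ((σ t i:ℝ) * (v j' i:ℝ)) :=
            Finset.sum_congr rfl fun i _ => h1 i
        _ = ∑ t, (f t:ℝ) * ((∑ i, σ t i * v j' i : ℤ):ℝ) := by
            rw [Finset.sum_comm]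
            refine Finset.sum_congr rfl fun t _ => ?_
            rw [← Finset.mul_sum]
            congr 1
            push_cast
            rfl
    have hterm0 : ∀ t, f t ≠ 0 → ∑ i, σ t i * v j i = 0 := by
      intro t ht
      have hnonneg : ∀ t' ∈ Finset.univ, (0:ℝ) ≤ (f t':ℝ) * ((∑ i, σ t' i * v j i : ℤ):ℝ) := by
        intro t' _
        apply mul_nonneg (f t').2
        exact_mod_cast hSpair (σ t') (hσS t') j
      have h0 := (Finset.sum_eq_zero_iff_of_nonneg hnonneg).mp
        (by rw [← hxpair j]; exact hxj) t (Finset.mem_univ t)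
      have hf : (f t : ℝ) ≠ 0 := by exact_mod_cast ht
      have h2 := (mul_eq_zero.mp h0).resolve_left hf
      exact_mod_cast h2
    classical
    set T := Finset.univ.filter (fun t => f t ≠ 0) with hT
    have hswap : ∀ j', ∑ i, (∑ t ∈ T, σ t i) * v j' i = ∑ t ∈ T, ∑ i, σ t i * v j' i := by
      intro j'
      calc ∑ i, (∑ t ∈ T, σ t i) * v j' i = ∑ i, ∑ t ∈ T, σ t i * v j' i :=
            Finset.sum_congr rfl fun i _ => Finset.sum_mul _ _ _
        _ = ∑ t ∈ T, ∑ i, σ t i * v j' i := Finset.sum_comm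
    refine ⟨fun i => ∑ t ∈ T, σ t i, ?_, ?_⟩
    · rw [hswap]
      refine Finset.sum_eq_zero fun t ht => ?_
      exact hterm0 t (Finset.mem_filter.mp ht).2
    · intro j' hj'
      rw [hswap]
      have hpos : 0 < ∑ t ∈ T, ∑ i, σ t i * v j' i := by
        apply Finset.sum_pos'
        · intro t _; exact hSpair (σ t) (hσS t) j'
        · have hx' : 0 < ∑ t, (f t:ℝ) * ((∑ i, σ t i * v j' i : ℤ):ℝ) := by
            rw [← hxpair j']; exact hxj' j' hj'
          obtain ⟨t0, ht0⟩ : ∃ t0, (0:ℝ) < (f t0:ℝ) * ((∑ i, σ t0 i * v j' i : ℤ):ℝ) := by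
            by_contra hno
            push_neg at hno
            have : ∑ t, (f t:ℝ) * ((∑ i, σ t i * v j' i : ℤ):ℝ) ≤ 0 :=
              Finset.sum_nonpos fun t _ => hno t
            linarith
          have hft0 : f t0 ≠ 0 := by
            intro h0
            rw [h0] at ht0
            simp at ht0
          refine ⟨t0, Finset.mem_filter.mpr ⟨Finset.mem_univ t0, hft0⟩, ?_⟩
          have := (mul_pos_iff.mp ht0)
          rcases this with ⟨_, hc⟩ | ⟨hc, _⟩
          · exact_mod_cast hc
          · exact absurd hc (not_lt.mpr (f t0).2)
      omega
  -- numeric setup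
  set A : ℤ := -(∑ i, a i * v j i) with hAdef
  have hAq : (q:ℤ) ≤ A := by simp only [hAdef]; linarith
  set N : ℤ := (q:ℤ)^2 with hNdef
  have hN1 : (1:ℤ) ≤ N := by nlinarith
  set xx : ℤ := (1+(q:ℤ))*A - 1 with hxxdef
  set mm : ℤ := -(xx / N) with hmmdef
  have hmmneg : mm ≤ -1 := by
    have hxN : N ≤ xx := by simp only [hxxdef, hNdef]; nlinarith
    have h1 : 1 ≤ xx / N := (Int.le_ediv_iff_mul_le (by linarith)).mpr (by linarith)
    omega
  set c : Fin m → ℤ := fun j' => -((1+(q:ℤ)) * ∑ i, a i * v j' i)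
      + N*mm*(∑ i, g1 i * v j' i) with hcdef
  set k : ℤ := ((Finset.univ.sup fun j' => (-(c j')).toNat : ℕ) : ℤ) + 1 with hkdef
  have hk0 : 0 ≤ k := by
    have : (0:ℤ) ≤ ((Finset.univ.sup fun j' => (-(c j')).toNat : ℕ) : ℤ) := Int.natCast_nonneg _
    omega
  have hkc : ∀ j', 1 - c j' ≤ k := by
    intro j'
    have h1 : (-(c j')).toNat ≤ Finset.univ.sup fun j'' => (-(c j'')).toNat :=
      Finset.le_sup (f := fun j'' => (-(c j'')).toNat) (Finset.mem_univ j')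
    have h2 : -(c j') ≤ ((-(c j')).toNat : ℤ) := Int.self_le_toNat _
    have h3 : (((-(c j')).toNat : ℕ):ℤ) ≤ ((Finset.univ.sup fun j'' => (-(c j'')).toNat : ℕ):ℤ) := by
      exact_mod_cast h1
    omega
  set u : Fin d → ℤ := fun i => mm * g1 i + k * z i with hudef
  set s : Fin d → ℤ := fun i => -((1+(q:ℤ)) * a i) + N * u i with hsdef
  have hsP : ∀ j', ∑ i, s i * v j' i = c j' + N*k*(∑ i, z i * v j' i) := by
    intro j'
    calc ∑ i, s i * v j' i
        = ∑ i, ((-(1+(q:ℤ))) * (a i * v j' i) + (N*mm)*(g1 i * v j' i)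
            + (N*k)*(z i * v j' i)) :=
          Finset.sum_congr rfl fun i _ => by simp only [hsdef, hudef]; ring
      _ = (-(1+(q:ℤ))) * (∑ i, a i * v j' i) + (N*mm)*(∑ i, g1 i * v j' i)
            + (N*k)*(∑ i, z i * v j' i) := by
          rw [Finset.sum_add_distrib, Finset.sum_add_distrib, ← Finset.mul_sum,
            ← Finset.mul_sum, ← Finset.mul_sum]
      _ = c j' + N*k*(∑ i, z i * v j' i) := by simp only [hcdef]; ring
  have hsj : ∑ i, s i * v j i = xx % N + 1 := by
    rw [hsP j, hz0]
    have hS' : ∑ i, a i * v j i = -A := by simp only [hAdef]; ring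
    have e1 : (1+(q:ℤ))*A = xx + 1 := by simp only [hxxdef]; ring
    have e2 : N * (xx / N) + xx % N = xx := Int.mul_ediv_add_emod xx N
    have e3 : mm = -(xx / N) := hmmdef
    simp only [hcdef]
    linear_combination (-(1+(q:ℤ))) * hS' + e1 - e2 + (N : ℤ) * e3 + (N*mm) * hg1
  have hsjpos : 1 ≤ ∑ i, s i * v j i := by
    rw [hsj]
    have := Int.emod_nonneg xx (by linarith : (N:ℤ) ≠ 0)
    omega
  have hspos : ∀ j', 0 < ∑ i, s i * v j' i := by
    intro j'
    by_cases hj' : j' = j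
    · subst hj'; linarith
    · rw [hsP j']
      have hZ1 : 1 ≤ ∑ i, z i * v j' i := hzpos j' hj'
      have h2 : 1 - c j' ≤ k := hkc j'
      have h3 : k ≤ k * (∑ i, z i * v j' i) := le_mul_of_one_le_right hk0 hZ1
      have h4 : k * (∑ i, z i * v j' i) ≤ N * (k * (∑ i, z i * v j' i)) :=
        le_mul_of_one_le_left (mul_nonneg hk0 (by linarith)) hN1
      have h5 : N*k*(∑ i, z i * v j' i) = N * (k * (∑ i, z i * v j' i)) := by ring
      linarith
  have hsreal : ∀ j', 0 < ∑ i, (emb d s) i * (v j' i : ℝ) := by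
    intro j'
    rw [hpair]
    exact_mod_cast hspos j'
  have hint : emb d s ∈ intrinsicInterior ℝ C := by
    apply interior_subset_intrinsicInterior
    have hopen : IsOpen {y : Fin d → ℝ | ∀ j', 0 < ∑ i, y i * (v j' i:ℝ)} := by
      have heq : {y : Fin d → ℝ | ∀ j', 0 < ∑ i, y i * (v j' i:ℝ)}
          = ⋂ j', {y : Fin d → ℝ | 0 < ∑ i, y i * (v j' i:ℝ)} := by
        ext y; simp [Set.mem_iInter]
      rw [heq]
      refine isOpen_iInter_of_finite fun j' => ?_
      exact isOpen_lt continuous_const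
        (continuous_finset_sum _ fun i _ => ((continuous_apply i).mul continuous_const))
    have hsub : {y : Fin d → ℝ | ∀ j', 0 < ∑ i, y i * (v j' i:ℝ)} ⊆ C := by
      rw [hdual]; intro y hy j'; exact (hy j').le
    exact interior_maximal hsub hopen hsreal
  have hfaceC : IsFace d C C := by
    refine ⟨0, fun y _ => ?_, ?_⟩
    · simp
    · ext y; simp
  have hlatmem : s ∈ latticeOf d S C := by
    have hinter : (S : Set (Fin d → ℤ)) ∩ (emb d) ⁻¹' C = (S : Set (Fin d → ℤ)) :=
      Set.inter_eq_left.mpr fun w hw => hSsubC w hw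
    rw [latticeOf, hinter, hZ]
    trivial
  have hsS : s ∈ S := (hsn C hfaceC s hint).mpr hlatmem
  have ht : (fun i => (a i + s i)/(q:ℤ)) ∈ S :=
    hhom s hsS fun i => ⟨-(a i) + (q:ℤ)*u i, by simp only [hsdef, hNdef]; ring⟩
  have hteq : (fun i => (a i + s i)/(q:ℤ)) = fun i => -(a i) + (q:ℤ)*u i := by
    funext i
    have h1 : a i + s i = (q:ℤ) * (-(a i) + (q:ℤ)*u i) := by
      simp only [hsdef, hNdef]; ring
    rw [h1, Int.mul_ediv_cancel_left _ hqz]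
  rw [hteq] at ht
  have hu2 : (fun i => (a i + (-(a i) + (q:ℤ)*u i))/(q:ℤ)) ∈ S :=
    hhom _ ht fun i => ⟨u i, by ring⟩
  have hueq : (fun i => (a i + (-(a i) + (q:ℤ)*u i))/(q:ℤ)) = u := by
    funext i
    have h1 : a i + (-(a i) + (q:ℤ)*u i) = (q:ℤ) * u i := by ring
    rw [h1, Int.mul_ediv_cancel_left _ hqz]
  rw [hueq] at hu2
  have hup : (0:ℤ) ≤ ∑ i, u i * v j i := hSpair u hu2 j
  have huval : ∑ i, u i * v j i = mm := by
    calc ∑ i, u i * v j i = ∑ i, (mm*(g1 i * v j i) + k*(z i * v j i)) :=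
          Finset.sum_congr rfl fun i _ => by simp only [hudef]; ring
      _ = mm * (∑ i, g1 i * v j i) + k * (∑ i, z i * v j i) := by
          rw [Finset.sum_add_distrib, ← Finset.mul_sum, ← Finset.mul_sum]
      _ = mm := by rw [hg1, hz0]; ring
  rw [huval] at hup
  omega


end
end
end

section
/- Let S be the submonoid of ℤ² generated by (4,0), (0,1), (1,1), (2,1), (3,1), p = 2, q = 2, and a = (1,0). Then a satisfies ⟨a, v_ρ⟩ > -1 for both dual cone rays, but π_a is not a homomorphism: (2,0) ∈ (1/2)S and a + (2,0) = (3,0) ∈ ℤ² but (3,0) ∉ S. -/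
/-- Auxiliary submonoid: pairs with nonnegative second coordinate, and if the
second coordinate is `0` then the first is divisible by `4`. -/
def T12 : AddSubmonoid (ℤ × ℤ) where
  carrier := {p | 0 ≤ p.2 ∧ (p.2 = 0 → 4 ∣ p.1)}
  zero_mem' := by simp
  add_mem' := by
    rintro ⟨x1, y1⟩ ⟨x2, y2⟩ ⟨h1, h1'⟩ ⟨h2, h2'⟩
    simp only [Set.mem_setOf_eq, Prod.mk_add_mk] at *
    omega

/-- Example: let `S ⊆ ℤ²` be generated by `(4,0), (0,1), (1,1), (2,1), (3,1)`, `p = q = 2`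
and `a = (1,0)`.  Then `a` pairs `> -1` against both dual rays `(1,0)` and `(0,1)`, yet
`π_a` is not a homomorphism: `(2,0) ∈ (1/2)S` (as `(4,0) ∈ S`), `a + (2,0) = (3,0) ∈ ℤ²`,
but `(3,0) ∉ S`; in particular `(a + (1/2)S) ∩ ℤ² ⊄ S`. -/
theorem stmt_12 (S : AddSubmonoid (ℤ × ℤ))
    (hS : S = AddSubmonoid.closure {(4, 0), (0, 1), (1, 1), (2, 1), (3, 1)})
    (a : ℤ × ℤ) (ha : a = (1, 0)) :
    (a.1 * 1 + a.2 * 0 > -1 ∧ a.1 * 0 + a.2 * 1 > -1) ∧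
      (4, 0) ∈ S ∧ a + (2, 0) = (3, 0) ∧ (3, 0) ∉ S ∧
      ¬ (∀ s ∈ S, (2 : ℤ) ∣ 2 * a.1 + s.1 → (2 : ℤ) ∣ 2 * a.2 + s.2 →
          ((2 * a.1 + s.1) / 2, (2 * a.2 + s.2) / 2) ∈ S) := by
  subst ha hS
  have h4 : ((4 : ℤ), (0 : ℤ)) ∈
      AddSubmonoid.closure ({(4, 0), (0, 1), (1, 1), (2, 1), (3, 1)} : Set (ℤ × ℤ)) :=
    AddSubmonoid.subset_closure (by simp)
  have hsub : AddSubmonoid.closure ({(4, 0), (0, 1), (1, 1), (2, 1), (3, 1)} : Set (ℤ × ℤ)) ≤ T12 := by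
    apply AddSubmonoid.closure_le.mpr
    rintro p hp
    simp only [Set.mem_insert_iff, Set.mem_singleton_iff] at hp
    rcases hp with rfl | rfl | rfl | rfl | rfl <;>
      exact ⟨by norm_num, by norm_num⟩
  have h3 : ((3 : ℤ), (0 : ℤ)) ∉
      AddSubmonoid.closure ({(4, 0), (0, 1), (1, 1), (2, 1), (3, 1)} : Set (ℤ × ℤ)) := by
    intro h
    have := hsub h
    obtain ⟨-, h'⟩ := this
    omega
  refine ⟨⟨by norm_num, by norm_num⟩, h4, by norm_num [Prod.ext_iff], h3, ?_⟩
  intro h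
  have := h (4, 0) h4 (by norm_num) (by norm_num)
  norm_num at this
  exact h3 this
end

section
/- Let S be a seminormal affine monoid, D a p-face of its cone, and u ∈ S ∩ span(D). Then for no q = p^e, no a ∈ (1/q)M satisfying the splitting conditions (in particular a ∉ (1/q)M̃_D whenever a ∈ span(D) for a pRUF D), and no w ∈ (1/q)S, can one have π_a(x^w) = x^u. Consequently, fixed ideals of the Cartier algebra cannot intersect p-faces. -/
noncomputable section


noncomputable section

/- ## Auxiliary lemmas -/

lemma emb_apply (d : ℕ) (m : Fin d → ℤ) (i : Fin d) : emb d m i = (m i : ℝ) := rfl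

def ratMap (d : ℕ) : (Fin d → ℤ) →ₗ[ℤ] (Fin d → ℚ) where
  toFun m := fun i => (m i : ℚ)
  map_add' x y := by ext i; simp [Pi.add_apply]
  map_smul' n x := by ext i; simp

lemma ratMap_apply (d : ℕ) (m : Fin d → ℤ) (i : Fin d) : ratMap d m i = (m i : ℚ) := rfl

lemma ratMap_inj (d : ℕ) : Function.Injective (ratMap d) := by
  intro x y h
  funext i
  have := congrFun h i
  simp only [ratMap_apply] at this
  exact_mod_cast this

/-- Clearing denominators in a rational span. -/
lemma exists_int_smul_mem_span {M : Type*} [AddCommGroup M] [Module ℚ M] (s : Set M) (x : M)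
    (hx : x ∈ Submodule.span ℚ s) : ∃ n : ℤ, n ≠ 0 ∧ n • x ∈ Submodule.span ℤ s := by
  induction hx using Submodule.span_induction with
  | mem x hxs => exact ⟨1, one_ne_zero, by simpa using Submodule.subset_span hxs⟩
  | zero => exact ⟨1, one_ne_zero, by simp⟩
  | add x y _ _ hx hy =>
      obtain ⟨n, hn, hnx⟩ := hx
      obtain ⟨m, hm, hmy⟩ := hy
      refine ⟨n * m, mul_ne_zero hn hm, ?_⟩
      have : (n * m) • (x + y) = m • (n • x) + n • (m • y) := by
        rw [smul_add, mul_smul n m x, smul_comm n m x, mul_smul n m y]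
      rw [this]
      exact add_mem (Submodule.smul_mem _ _ hnx) (Submodule.smul_mem _ _ hmy)
  | smul a x _ hx =>
      obtain ⟨n, hn, hnx⟩ := hx
      refine ⟨n * a.den, mul_ne_zero hn (by exact_mod_cast a.den_nz), ?_⟩
      have h1 : (n * (a.den : ℤ)) • (a • x) = (a.num * n) • x := by
        rw [← Int.cast_smul_eq_zsmul ℚ, ← Int.cast_smul_eq_zsmul ℚ (a.num * n), ← smul_assoc]
        congr 1
        push_cast
        rw [smul_eq_mul]
        rw [mul_assoc, Rat.den_mul_eq_num]
        ring
      rw [h1, mul_smul]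
      exact Submodule.smul_mem _ _ hnx

/-- Descent of span membership from `ℝ` to `ℚ` for integral vectors. -/
lemma mem_ratSpan {d : ℕ} (Tset : Set (Fin d → ℤ)) (y : Fin d → ℤ)
    (h : emb d y ∈ Submodule.span ℝ (emb d '' Tset)) :
    ratMap d y ∈ Submodule.span ℚ (ratMap d '' Tset) := by
  by_contra hy
  set W := Submodule.span ℚ (ratMap d '' Tset) with hW
  have hne : W.mkQ (ratMap d y) ≠ 0 := by
    simpa [Submodule.mkQ_apply, Submodule.Quotient.mk_eq_zero] using hy
  obtain ⟨φ, hφ⟩ : ∃ φ : Module.Dual ℚ ((Fin d → ℚ) ⧸ W), φ (W.mkQ (ratMap d y)) ≠ 0 := by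
    by_contra hall
    push_neg at hall
    exact hne ((Module.forall_dual_apply_eq_zero_iff ℚ _).mp hall)
  set f : (Fin d → ℚ) →ₗ[ℚ] ℚ := φ.comp W.mkQ with hf
  have hfW : ∀ x ∈ W, f x = 0 := by
    intro x hx
    simp [hf, LinearMap.comp_apply, (Submodule.Quotient.mk_eq_zero _).mpr hx]
  set F : (Fin d → ℝ) →ₗ[ℝ] ℝ :=
    ∑ i : Fin d, ((f (Pi.single i 1) : ℚ) : ℝ) • (LinearMap.proj i) with hF
  have hFz : ∀ z : Fin d → ℚ, F (fun i => (z i : ℝ)) = ((f z : ℚ) : ℝ) := by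
    intro z
    rw [LinearMap.pi_apply_eq_sum_univ f z]
    push_cast
    simp only [hF, LinearMap.sum_apply, LinearMap.smul_apply, LinearMap.proj_apply, smul_eq_mul,
      mul_comm]
    refine Finset.sum_congr rfl fun x _ => ?_
    have : (Pi.single x 1 : Fin d → ℚ) = fun j => if x = j then 1 else 0 := by
      funext j
      simp [Pi.single_apply, eq_comm]
    rw [this]
    push_cast
    ring
  have hcast : ∀ m : Fin d → ℤ, emb d m = fun i => ((ratMap d m) i : ℝ) := by
    intro m; funext i; simp [emb_apply, ratMap_apply]
  have hker : Submodule.span ℝ (emb d '' Tset) ≤ LinearMap.ker F := by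
    rw [Submodule.span_le]
    rintro _ ⟨t, ht, rfl⟩
    rw [SetLike.mem_coe, LinearMap.mem_ker, hcast t, hFz]
    rw [hfW _ (Submodule.subset_span ⟨t, ht, rfl⟩)]
    simp
  have h0 := hker h
  rw [LinearMap.mem_ker, hcast y, hFz] at h0
  have : f (ratMap d y) = 0 := by exact_mod_cast h0
  exact hφ (by simpa [hf] using this)

/-- Elements of the subgroup closure of an additive submonoid-like set are differences. -/
lemma closure_eq_sub {M : Type*} [AddCommGroup M] {T : Set M} (h0 : (0:M) ∈ T)
    (hadd : ∀ x ∈ T, ∀ y ∈ T, x + y ∈ T) {x : M} (hx : x ∈ AddSubgroup.closure T) :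
    ∃ t1 ∈ T, ∃ t2 ∈ T, x = t1 - t2 := by
  let G : AddSubgroup M :=
    { carrier := {z | ∃ t1 ∈ T, ∃ t2 ∈ T, z = t1 - t2}
      zero_mem' := ⟨0, h0, 0, h0, by simp⟩
      add_mem' := by
        rintro a b ⟨a1, ha1, a2, ha2, rfl⟩ ⟨b1, hb1, b2, hb2, rfl⟩
        exact ⟨a1 + b1, hadd _ ha1 _ hb1, a2 + b2, hadd _ ha2 _ hb2, by abel⟩
      neg_mem' := by
        rintro a ⟨a1, ha1, a2, ha2, rfl⟩
        exact ⟨a2, ha2, a1, ha1, by abel⟩ }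
  exact (AddSubgroup.closure_le G).mpr (fun t ht => ⟨t, ht, 0, h0, by simp⟩) hx

lemma span_int_le_closure {M : Type*} [AddCommGroup M] (T : Set M) {x : M}
    (hx : x ∈ Submodule.span ℤ T) : x ∈ AddSubgroup.closure T := by
  have h : Submodule.span ℤ T ≤ AddSubgroup.toIntSubmodule (AddSubgroup.closure T) :=
    Submodule.span_le.mpr (fun t ht => AddSubgroup.subset_closure ht)
  exact h hx

/-- Lemma (monomials on `p`-faces cannot be hit): let `S` be a seminormal affine monoid,
`D` a `p`-face of its cone `C`, and `u ∈ S ∩ span D`.  Then for no `q = p^e` with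
`e > 0`, no `a ∈ (1/q)ℤ^d` satisfying the splitting conditions — i.e. `π_a` a
homomorphism, `(a + (1/q)S) ∩ M ⊆ S`, and in particular `a ∉ (1/q)M̃_{D'}` whenever
`a ∈ span D'` for a pRUF `D'` — and no `w ∈ (1/q)S`, can one have `π_a(x^w) = x^u`,
i.e. `a + w = u` as points of `(1/q)ℤ^d`.  (Here `a, w` are encoded by their numerator
vectors, so the conclusion reads `a + w ≠ q • u`.) -/
theorem stmt_13 (d : ℕ) (p : ℕ) (hp : p.Prime)
    (S : AddSubmonoid (Fin d → ℤ)) (hfg : S.FG)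
    (hZ : AddSubgroup.closure (S : Set (Fin d → ℤ)) = ⊤)
    (C : Set (Fin d → ℝ)) (hC : C = coneOf d S)
    (hpointed : ∀ x ∈ C, -x ∈ C → x = 0)
    (hsn : Seminormal d S C)
    (D : Set (Fin d → ℝ)) (hD : IsFace d C D) (hpf : pFace d p S D)
    (u : Fin d → ℤ) (hu : u ∈ S) (huD : emb d u ∈ Submodule.span ℝ D) :
    ∀ e : ℕ, 0 < e → ∀ q : ℕ, q = p ^ e → ∀ a w : Fin d → ℤ, w ∈ S →
      (∀ s ∈ S, (∀ i, (q : ℤ) ∣ a i + s i) → (fun i => (a i + s i) / (q : ℤ)) ∈ S) →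
      (∀ D' : Set (Fin d → ℝ), IsRUF d S C D' → pFace d p S D' →
        emb d a ∈ Submodule.span ℝ D' → a ∉ Mtilde d p S D') →
      ¬ (∀ i, a i + w i = (q : ℤ) * u i) := by
  intro e he q hq a w hw H _hRUF hcontra
  have hq1 : 1 ≤ q := by rw [hq]; exact Nat.one_le_pow _ _ hp.pos
  have hq0 : (q : ℤ) ≠ 0 := by positivity
  -- face data
  obtain ⟨ℓ, hℓ, hDdef⟩ := hD
  set T : Set (Fin d → ℤ) := (S : Set (Fin d → ℤ)) ∩ (emb d) ⁻¹' D with hT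
  have hSC : ∀ s : Fin d → ℤ, s ∈ S → emb d s ∈ C := by
    intro s hs
    rw [hC]
    exact Submodule.subset_span ⟨s, hs, rfl⟩
  have hDzero : ∀ x ∈ D, ℓ x = 0 := by intro x hx; rw [hDdef] at hx; exact hx.2
  have hDC : D ⊆ C := by intro x hx; rw [hDdef] at hx; exact hx.1
  have hspanker : Submodule.span ℝ D ≤ LinearMap.ker ℓ := by
    rw [Submodule.span_le]
    intro x hx
    rw [SetLike.mem_coe, LinearMap.mem_ker]
    exact hDzero x hx
  have hmemD : ∀ s : Fin d → ℤ, s ∈ S → emb d s ∈ Submodule.span ℝ D → s ∈ T := by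
    intro s hs hsp
    refine ⟨hs, ?_⟩
    show emb d s ∈ D
    rw [hDdef]
    exact ⟨hSC s hs, hspanker hsp⟩
  have huT : u ∈ T := hmemD u hu huD
  -- the key reduction coming from the splitting condition
  have R : ∀ v : Fin d → ℤ, w + q • v ∈ S → u + v ∈ S := by
    intro v hv
    have key : ∀ i, a i + (w + q • v) i = (q : ℤ) * (u i + v i) := by
      intro i
      have h1 := hcontra i
      simp only [Pi.add_apply, Pi.smul_apply, Pi.mul_apply, Pi.natCast_apply, nsmul_eq_mul]
      push_cast
      linarith [h1]
    have hdvd : ∀ i, (q : ℤ) ∣ a i + (w + q • v) i := fun i => ⟨u i + v i, key i⟩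
    have hmem := H _ hv hdvd
    have heq : (fun i => (a i + (w + q • v) i) / (q : ℤ)) = u + v := by
      funext i
      rw [key i, Int.mul_ediv_cancel_left _ hq0]
      rfl
    rwa [heq] at hmem
  -- D is contained in the real span of `emb '' T`
  have hDspan : D ⊆ (Submodule.span ℝ (emb d '' T) : Set (Fin d → ℝ)) := by
    intro x hx
    have hxC : x ∈ C := hDC hx
    have hxl : ℓ x = 0 := hDzero x hx
    rw [hC] at hxC
    rw [coneOf, SetLike.mem_coe] at hxC
    obtain ⟨c, hsupp, hsum⟩ := Submodule.mem_span_set.mp hxC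
    have hterm : ∀ z ∈ c.support, (c z : ℝ) * ℓ z = 0 := by
      have hsum0 : ∑ z ∈ c.support, (c z : ℝ) * ℓ z = 0 := by
        have hx2 : ℓ x = ∑ z ∈ c.support, (c z : ℝ) * ℓ z := by
          rw [← hsum, Finsupp.sum, map_sum]
          refine Finset.sum_congr rfl fun z _ => ?_
          rw [NNReal.smul_def, map_smul, smul_eq_mul]
        rw [← hx2, hxl]
      refine (Finset.sum_eq_zero_iff_of_nonneg ?_).mp hsum0
      intro z hz
      have hzC : z ∈ C := by
        rw [hC]
        exact Submodule.subset_span (hsupp hz)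
      exact mul_nonneg (c z).coe_nonneg (hℓ z hzC)
    rw [SetLike.mem_coe, ← hsum, Finsupp.sum]
    refine Submodule.sum_mem _ fun z hz => ?_
    rcases eq_or_ne (c z) 0 with h0 | h0
    · simp [h0]
    · have hℓz : ℓ z = 0 := by
        rcases mul_eq_zero.mp (hterm z hz) with h | h
        · exact absurd (by exact_mod_cast h) h0
        · exact h
      obtain ⟨s, hsS, rfl⟩ := hsupp hz
      have hsT : s ∈ T := ⟨hsS, show emb d s ∈ D by rw [hDdef]; exact ⟨hSC s hsS, hℓz⟩⟩
      rw [NNReal.smul_def]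
      exact Submodule.smul_mem _ _ (Submodule.subset_span ⟨s, hsT, rfl⟩)
  -- membership in latIn unfolds to span membership
  have hlatIn : ∀ y : Fin d → ℤ, y ∈ latIn d D ↔ emb d y ∈ Submodule.span ℝ D := fun y => Iff.rfl
  -- torsion
  have htors : ∀ y : Fin d → ℤ, y ∈ latIn d D → ∃ n : ℤ, n ≠ 0 ∧ n • y ∈ latticeOf d S D := by
    intro y hy
    have h1 : emb d y ∈ Submodule.span ℝ D := (hlatIn y).mp hy
    have h2 : emb d y ∈ Submodule.span ℝ (emb d '' T) := (Submodule.span_le.mpr hDspan) h1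
    have h3 := mem_ratSpan T y h2
    obtain ⟨n, hn, hns⟩ := exists_int_smul_mem_span _ _ h3
    refine ⟨n, hn, ?_⟩
    rw [← map_smul, Submodule.span_image, Submodule.mem_map] at hns
    obtain ⟨z, hz, hzeq⟩ := hns
    have hzy : z = n • y := ratMap_inj d hzeq
    rw [hzy] at hz
    exact span_int_le_closure _ hz
  -- the quotient group is finite
  set Lsub := (latticeOf d S D).addSubgroupOf (latIn d D) with hLsub
  haveI hKfg : AddGroup.FG ↥(latIn d D) := by
    have h1 : Module.Finite ℤ ↥(AddSubgroup.toIntSubmodule (latIn d D)) :=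
      Module.Finite.iff_fg.mpr (IsNoetherian.noetherian _)
    exact Module.Finite.iff_addGroup_fg.mp h1
  haveI hQfg : AddGroup.FG (↥(latIn d D) ⧸ Lsub) :=
    AddGroup.fg_of_surjective (QuotientAddGroup.mk'_surjective Lsub)
  have hQtors : AddMonoid.IsTorsion (↥(latIn d D) ⧸ Lsub) := by
    intro g
    obtain ⟨⟨y, hy⟩, rfl⟩ := QuotientAddGroup.mk'_surjective Lsub g
    obtain ⟨n, hn, hnL⟩ := htors y hy
    rw [isOfFinAddOrder_iff_zsmul_eq_zero]
    refine ⟨n, hn, ?_⟩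
    rw [← map_zsmul, QuotientAddGroup.mk'_apply, QuotientAddGroup.eq_zero_iff,
      AddSubgroup.mem_addSubgroupOf]
    exact hnL
  haveI hQfin : Finite (↥(latIn d D) ⧸ Lsub) := AddCommGroup.finite_of_fg_torsion _ hQtors
  haveI : Fact p.Prime := ⟨hp⟩
  have hdvdcard : p ∣ Nat.card (↥(latIn d D) ⧸ Lsub) := hpf
  obtain ⟨g, hg⟩ := exists_prime_addOrderOf_dvd_card' (G := ↥(latIn d D) ⧸ Lsub) p hdvdcard
  have hg0 : g ≠ 0 := by
    intro h
    rw [h, addOrderOf_zero] at hg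
    exact hp.ne_one hg.symm
  have hqg : q • g = 0 := by
    rw [← addOrderOf_dvd_iff_nsmul_eq_zero, hg, hq]
    exact dvd_pow_self p he.ne'
  obtain ⟨⟨y, hyK⟩, rfl⟩ := QuotientAddGroup.mk'_surjective Lsub g
  have hynotL : y ∉ latticeOf d S D := by
    intro hyL
    apply hg0
    rw [QuotientAddGroup.mk'_apply, QuotientAddGroup.eq_zero_iff, AddSubgroup.mem_addSubgroupOf]
    exact hyL
  have hqyL : (q : ℤ) • y ∈ latticeOf d S D := by
    have h1 : (QuotientAddGroup.mk' Lsub) ((q : ℕ) • (⟨y, hyK⟩ : ↥(latIn d D))) = 0 := by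
      rw [map_nsmul]
      exact hqg
    rw [QuotientAddGroup.mk'_apply, QuotientAddGroup.eq_zero_iff,
      AddSubgroup.mem_addSubgroupOf] at h1
    have : ((q : ℕ) • (⟨y, hyK⟩ : ↥(latIn d D)) : ↥(latIn d D)) = ⟨q • y, by
      exact AddSubgroup.nsmul_mem _ hyK q⟩ := by
      ext i
      simp
    rw [this] at h1
    simpa using h1
  -- express q • y as a difference of elements of T
  have h0T : (0 : Fin d → ℤ) ∈ T := by
    refine ⟨S.zero_mem, ?_⟩
    show emb d 0 ∈ D
    rw [map_zero, hDdef]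
    constructor
    · rw [hC]
      exact Submodule.zero_mem (Submodule.span NNReal (emb d '' (S : Set (Fin d → ℤ))))
    · exact map_zero ℓ
  have haddT : ∀ x ∈ T, ∀ z ∈ T, x + z ∈ T := by
    rintro x ⟨hxS, hxD⟩ z ⟨hzS, hzD⟩
    refine ⟨S.add_mem hxS hzS, ?_⟩
    show emb d (x + z) ∈ D
    rw [map_add, hDdef]
    constructor
    · have hx1 : emb d x ∈ C := hDC hxD
      have hz1 : emb d z ∈ C := hDC hzD
      rw [hC] at hx1 hz1 ⊢
      exact Submodule.add_mem (Submodule.span NNReal (emb d '' (S : Set (Fin d → ℤ)))) hx1 hz1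
    · rw [map_add, hDzero _ hxD, hDzero _ hzD, add_zero]
  obtain ⟨t1, ht1, t2, ht2, hqyeq⟩ := closure_eq_sub h0T haddT hqyL
  -- final contradiction
  have hv : w + q • (y + t2) ∈ S := by
    have hzy : (q : ℕ) • y = t1 - t2 := by
      rw [← natCast_zsmul]
      exact hqyeq
    have heq : w + q • (y + t2) = w + t1 + (q - 1) • t2 := by
      rw [smul_add, hzy]
      have h5 : (q : ℕ) • t2 = (q - 1) • t2 + t2 := by
        rw [← succ_nsmul, Nat.sub_add_cancel hq1]
      rw [h5]
      generalize (q - 1) • t2 = z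
      abel
    rw [heq]
    exact S.add_mem (S.add_mem hw ht1.1) (AddSubmonoid.nsmul_mem S ht2.1 _)
  have hfin : u + (y + t2) ∈ S := R (y + t2) hv
  have hspan2 : emb d (u + (y + t2)) ∈ Submodule.span ℝ D := by
    rw [map_add, map_add]
    refine Submodule.add_mem _ huD (Submodule.add_mem _ ((hlatIn y).mp hyK) ?_)
    exact Submodule.subset_span ht2.2
  have hTmem : u + (y + t2) ∈ T := hmemD _ hfin hspan2
  have hyL : y ∈ latticeOf d S D := by
    have h1 : u + (y + t2) ∈ latticeOf d S D := AddSubgroup.subset_closure hTmem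
    have h2 : u ∈ latticeOf d S D := AddSubgroup.subset_closure huT
    have h3 : t2 ∈ latticeOf d S D := AddSubgroup.subset_closure ht2
    have heq : y = (u + (y + t2)) - u - t2 := by abel
    rw [heq]
    exact AddSubgroup.sub_mem _ (AddSubgroup.sub_mem _ h1 h2) h3
  exact hynotL hyL

end
end
end
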